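/- arXiv:2009.02297 — 5 statements merged into one kernel-verified Lean document; each statement's English description precedes it below -/
import Mathlib

section
/- Consider the 1-hop-max RGCR scheme with independent cluster-level randomization at treatment probability p ∈ (0,1). For every node i, the full-neighborhood exposure probabilities satisfy P(E_i^1) ≥ p/|B_2(i)| and P(E_i^0) ≥ (1−p)/|B_2(i)|. -/
open MeasureTheory ProbabilityTheory Filter SimpleGraph Set

open scoped ENNReal

noncomputable section

/-- The `r`-hop ball around node `i`: all nodes at graph distance at most `r`
(using the extended graph distance, so unreachable nodes are excluded). -/
def hopBall {V : Type*} (G : SimpleGraph V) (i : V) (r : ℕ) : Set V :=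
  {j | G.edist i j ≤ r}

/-- The full-neighborhood exposure event in the 1-hop-max RGCR scheme: every node
`j` in the closed neighborhood `B₁(i)` has treatment status `b`, i.e. the cluster
center of `j` (the node `v ∈ B₁(j)` achieving the 1-hop max of `X`) has `Z v = b`. -/
def exposure {V Ω : Type*} (G : SimpleGraph V) (X : V → Ω → ℝ) (Z : V → Ω → Bool)
    (b : Bool) (i : V) : Set Ω :=
  {ω | ∀ j ∈ hopBall G i 1, ∃ v ∈ hopBall G j 1,
      (∀ u ∈ hopBall G j 1, X u ω ≤ X v ω) ∧ Z v ω = b}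

/-- The 1-hop-max RGCR model with independent cluster-level randomization:
the `X v` are i.i.d. uniform on `[0,1]`, the `Z v` are i.i.d. Bernoulli(`p`),
and the family `X` is independent of the family `Z`. -/
structure RGCRModel {V Ω : Type*} [MeasurableSpace Ω]
    (X : V → Ω → ℝ) (Z : V → Ω → Bool) (μ : Measure Ω) (p : ℝ) : Prop where
  meas_X : ∀ v, Measurable (X v)
  meas_Z : ∀ v, Measurable (Z v)
  law_X : ∀ v, μ.map (X v) = volume.restrict (Set.Icc (0:ℝ) 1)
  law_Z : ∀ v, μ {ω | Z v ω = true} = ENNReal.ofReal p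
  indep_X : iIndepFun X μ
  indep_Z : iIndepFun Z μ
  indep_XZ : IndepFun (fun ω v => X v ω) (fun ω v => Z v ω) μ

/-- iid family: joint law is the product measure. -/
lemma map_fun_eq_pi {V Ω : Type*} [Fintype V] [MeasurableSpace Ω]
    (μ : Measure Ω) (X : V → Ω → ℝ) (ν : Measure ℝ)
    [SigmaFinite ν]
    (hm : ∀ v, Measurable (X v)) (hlaw : ∀ v, μ.map (X v) = ν)
    (hind : iIndepFun X μ) :
    μ.map (fun ω v => X v ω) = Measure.pi (fun _ => ν) := by
  refine (Measure.pi_eq (μ := fun _ : V => ν) fun s hs => ?_).symm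
  rw [Measure.map_apply (measurable_pi_lambda _ hm) (MeasurableSet.univ_pi hs)]
  have : (fun ω v => X v ω) ⁻¹' (Set.pi Set.univ s) = ⋂ v ∈ Finset.univ, X v ⁻¹' s v := by
    ext ω; simp [Set.mem_pi]
  rw [this, hind.measure_inter_preimage_eq_mul Finset.univ (fun v _ => hs v)]
  refine Finset.prod_congr rfl fun v _ => ?_
  rw [← hlaw v, Measure.map_apply (hm v) (hs v)]

/-- Product measures with identical factors are exchangeable. -/
lemma pi_symm {V : Type*} [Fintype V] (ν : Measure ℝ) [SigmaFinite ν] (e : V ≃ V)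
    {C : Set (V → ℝ)} (hC : MeasurableSet C) :
    Measure.pi (fun _ : V => ν) ((fun f => f ∘ e) ⁻¹' C) = Measure.pi (fun _ : V => ν) C := by
  have h := (measurePreserving_piCongrLeft (fun _ : V => ν) e).symm
    (MeasurableEquiv.piCongrLeft (fun _ => ℝ) e)
  have hco : ⇑(MeasurableEquiv.piCongrLeft (fun _ : V => ℝ) e).symm = fun f => f ∘ e := by
    funext f
    simp [MeasurableEquiv.piCongrLeft, Equiv.piCongrLeft_symm_apply]
    rfl
  rw [← hco]
  exact h.measure_preimage hC.nullMeasurableSet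

/-- The probability that a fixed element of a finite set attains the max of iid
random variables over that set is at least `1 / card`. -/
lemma pi_max_lower {V : Type*} [Fintype V] (ν : Measure ℝ) [IsProbabilityMeasure ν]
    (S : Set V) (i : V) (hi : i ∈ S) :
    ((S.ncard : ℝ≥0∞))⁻¹ ≤ Measure.pi (fun _ : V => ν) {f | ∀ u ∈ S, f u ≤ f i} := by
  classical
  set π := Measure.pi (fun _ : V => ν) with hπ
  set C : V → Set (V → ℝ) := fun v => {f | ∀ u ∈ S, f u ≤ f v} with hCdef
  have hCmeas : ∀ v, MeasurableSet (C v) := by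
    intro v
    have : C v = ⋂ u ∈ S, {f : V → ℝ | f u ≤ f v} := by
      ext f; simp [hCdef]
    rw [this]
    exact MeasurableSet.biInter S.to_countable fun u _ =>
      measurableSet_le (measurable_pi_apply u) (measurable_pi_apply v)
  have hCeq : ∀ v ∈ S, π (C v) = π (C i) := by
    intro v hv
    have e : V ≃ V := Equiv.swap i v
    have heS : ∀ w, w ∈ S → (Equiv.swap i v) w ∈ S := by
      intro w hw
      rcases eq_or_ne w i with rfl | hwi
      · simpa using hv
      rcases eq_or_ne w v with rfl | hwv
      · simpa using hi
      · rwa [Equiv.swap_apply_of_ne_of_ne hwi hwv]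
    have hpre : (fun f : V → ℝ => f ∘ (Equiv.swap i v)) ⁻¹' (C i) = C v := by
      ext f
      constructor
      · intro hf w hw
        have := hf ((Equiv.swap i v) w) (heS w hw)
        simpa [Function.comp, Equiv.swap_apply_self] using this
      · intro hf w hw
        have := hf ((Equiv.swap i v) w) (heS w hw)
        simpa [Function.comp, Equiv.swap_apply_left] using this
    rw [← hpre, hπ, pi_symm ν (Equiv.swap i v) (hCmeas i)]
  have hScount : S.ncard = S.toFinset.card := S.ncard_eq_toFinset_card'
  have hcover : (Set.univ : Set (V → ℝ)) ⊆ ⋃ v ∈ S.toFinset, C v := by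
    intro f _
    obtain ⟨v, hv, hmax⟩ := S.toFinset.exists_max_image f ⟨i, Set.mem_toFinset.2 hi⟩
    refine Set.mem_biUnion hv fun u hu => hmax u (Set.mem_toFinset.2 hu)
  have hone : (1 : ℝ≥0∞) ≤ (S.ncard : ℝ≥0∞) * π (C i) := by
    calc (1 : ℝ≥0∞) = π Set.univ := (measure_univ).symm
      _ ≤ π (⋃ v ∈ S.toFinset, C v) := measure_mono hcover
      _ ≤ ∑ v ∈ S.toFinset, π (C v) := measure_biUnion_finset_le _ _
      _ = ∑ v ∈ S.toFinset, π (C i) :=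
          Finset.sum_congr rfl fun v hv => hCeq v (Set.mem_toFinset.1 hv)
      _ = (S.toFinset.card : ℝ≥0∞) * π (C i) := by
          rw [Finset.sum_const, nsmul_eq_mul]
      _ = (S.ncard : ℝ≥0∞) * π (C i) := by rw [hScount]
  have hn0 : (S.ncard : ℝ≥0∞) ≠ 0 := by
    have : S.ncard ≠ 0 := by
      have : S.Nonempty := ⟨i, hi⟩
      simpa [Set.ncard_eq_zero S.toFinite] using this.ne_empty
    exact_mod_cast this
  calc ((S.ncard : ℝ≥0∞))⁻¹ = ((S.ncard : ℝ≥0∞))⁻¹ * 1 := (mul_one _).symm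
    _ ≤ ((S.ncard : ℝ≥0∞))⁻¹ * ((S.ncard : ℝ≥0∞) * π (C i)) := by
        exact mul_le_mul_right hone _
    _ = π (C i) := by
        rw [← mul_assoc, ENNReal.inv_mul_cancel hn0 (by simp), one_mul]

/-- Under 1-hop-max RGCR with independent cluster-level
randomization at treatment probability `p ∈ (0,1)`, for every node `i` the
full-neighborhood exposure probabilities satisfy
`P(E_i^1) ≥ p / |B₂(i)|` and `P(E_i^0) ≥ (1-p) / |B₂(i)|`. -/
theorem exposure_prob_lower_bound
    {V Ω : Type*} [Fintype V] [MeasurableSpace Ω]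
    (G : SimpleGraph V) (μ : Measure Ω) [IsProbabilityMeasure μ]
    (X : V → Ω → ℝ) (Z : V → Ω → Bool) (p : ℝ) (hp : p ∈ Set.Ioo (0:ℝ) 1)
    (hmodel : RGCRModel X Z μ p) (i : V) :
    ENNReal.ofReal (p / ((hopBall G i 2).ncard : ℝ)) ≤ μ (exposure G X Z true i) ∧
    ENNReal.ofReal ((1 - p) / ((hopBall G i 2).ncard : ℝ)) ≤ μ (exposure G X Z false i) := by
  classical
  set ν : Measure ℝ := volume.restrict (Set.Icc (0:ℝ) 1) with hν
  have hνprob : IsProbabilityMeasure ν := by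
    constructor
    rw [hν, Measure.restrict_apply_univ, Real.volume_Icc]
    norm_num
  set S : Set V := hopBall G i 2 with hS
  have hiS : i ∈ S := by
    simp [hS, hopBall]
  set C : Set (V → ℝ) := {f | ∀ u ∈ S, f u ≤ f i} with hCdef
  have hCmeas : MeasurableSet C := by
    have : C = ⋂ u ∈ S, {f : V → ℝ | f u ≤ f i} := by ext f; simp [hCdef]
    rw [this]
    exact MeasurableSet.biInter S.to_countable fun u _ =>
      measurableSet_le (measurable_pi_apply u) (measurable_pi_apply i)
  -- the X-event: X i is the max over B₂(i)
  set M : Set Ω := (fun ω v => X v ω) ⁻¹' C with hM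
  have hμM : ((S.ncard : ℝ≥0∞))⁻¹ ≤ μ M := by
    have hmap := map_fun_eq_pi μ X ν hmodel.meas_X hmodel.law_X hmodel.indep_X
    have : μ M = Measure.pi (fun _ : V => ν) C := by
      rw [hM, ← Measure.map_apply (measurable_pi_lambda _ hmodel.meas_X) hCmeas, hmap]
    rw [this]
    exact pi_max_lower ν S i hiS
  -- Z-event measures
  have hZtrue : μ {ω | Z i ω = true} = ENNReal.ofReal p := hmodel.law_Z i
  have hZmeasset : MeasurableSet {ω | Z i ω = true} :=
    hmodel.meas_Z i (measurableSet_singleton true)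
  have hZfalse : μ {ω | Z i ω = false} = ENNReal.ofReal (1 - p) := by
    have hcompl : {ω | Z i ω = false} = {ω | Z i ω = true}ᶜ := by
      ext ω; simp
    rw [hcompl, measure_compl hZmeasset (measure_ne_top μ _), hZtrue, measure_univ,
      ← ENNReal.ofReal_one, ← ENNReal.ofReal_sub _ hp.1.le]
  -- the key inclusion and independence bound, for both b = true and b = false
  have key : ∀ b : Bool, ∀ q : ℝ, 0 ≤ q → μ {ω | Z i ω = b} = ENNReal.ofReal q →
      ENNReal.ofReal (q / ((hopBall G i 2).ncard : ℝ)) ≤ μ (exposure G X Z b i) := by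
    intro b q hq hμZ
    set D : Set (V → Bool) := {g | g i = b} with hD
    have hDmeas : MeasurableSet D := by
      have : D = (fun g : V → Bool => g i) ⁻¹' {b} := rfl
      rw [this]; exact measurable_pi_apply i (measurableSet_singleton b)
    have hpre : (fun ω v => Z v ω) ⁻¹' D = {ω | Z i ω = b} := rfl
    have hincl : M ∩ ((fun ω v => Z v ω) ⁻¹' D) ⊆ exposure G X Z b i := by
      rintro ω ⟨hMω, hDω⟩ j hj
      refine ⟨i, ?_, fun u hu => ?_, hDω⟩
      · simpa [hopBall, SimpleGraph.edist_comm] using hj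
      · refine hMω u ?_
        have h1 : G.edist i j ≤ 1 := hj
        have h2 : G.edist j u ≤ 1 := hu
        have := (G.edist_triangle (u := i) (v := j) (w := u))
        have : G.edist i u ≤ 2 := le_trans this (by
          calc G.edist i j + G.edist j u ≤ 1 + 1 := add_le_add h1 h2
            _ = 2 := by norm_num)
        simpa [hS, hopBall] using this
    have hindep := hmodel.indep_XZ.measure_inter_preimage_eq_mul C D hCmeas hDmeas
    have hbound : ((S.ncard : ℝ≥0∞))⁻¹ * ENNReal.ofReal q ≤ μ (exposure G X Z b i) := by
      calc ((S.ncard : ℝ≥0∞))⁻¹ * ENNReal.ofReal q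
          ≤ μ M * ENNReal.ofReal q := mul_le_mul_left hμM _
        _ = μ M * μ {ω | Z i ω = b} := by rw [hμZ]
        _ = μ (M ∩ ((fun ω v => Z v ω) ⁻¹' D)) := by
            rw [hM, hindep, hpre]
        _ ≤ μ (exposure G X Z b i) := measure_mono hincl
    refine le_trans (le_of_eq ?_) hbound
    have hn : 0 < (S.ncard : ℝ) := by
      have : S.ncard ≠ 0 := by
        have hne : S.Nonempty := ⟨i, hiS⟩
        simpa [Set.ncard_eq_zero S.toFinite] using hne.ne_empty
      positivity
    rw [div_eq_mul_inv, ENNReal.ofReal_mul hq, ENNReal.ofReal_inv_of_pos hn,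
      ENNReal.ofReal_natCast, mul_comm]
  exact ⟨key true p hp.1.le hZtrue, key false (1 - p) (by linarith [hp.2]) hZfalse⟩
end
end

section
/- Consider the 1-hop-max RGCR scheme with independent cluster-level randomization at treatment probability p ∈ (0,1), on a graph with maximum degree d_max and restricted growth coefficient κ. For every node i, P(E_i^1) ≥ p/((1+d_max)κ) and P(E_i^0) ≥ (1−p)/((1+d_max)κ). -/
open MeasureTheory ProbabilityTheory Filter SimpleGraph Set
open scoped ENNReal

noncomputable section

/-- The joint law of an independent family with uniform marginals is the product
of uniforms. -/
lemma rgcr_joint_law {V Ω : Type*} [Fintype V] [MeasurableSpace Ω]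
    (μ : Measure Ω) (X : V → Ω → ℝ)
    (measX : ∀ v, Measurable (X v))
    (lawX : ∀ v, μ.map (X v) = volume.restrict (Set.Icc (0:ℝ) 1))
    (indepX : iIndepFun X μ) :
    μ.map (fun ω (v : V) => X v ω)
      = Measure.pi (fun _ : V => volume.restrict (Set.Icc (0:ℝ) 1)) := by
  have hF : Measurable (fun ω (v : V) => X v ω) :=
    measurable_pi_lambda _ fun v => measX v
  refine (Measure.pi_eq fun s hs => ?_).symm
  rw [Measure.map_apply hF (MeasurableSet.univ_pi hs)]
  have hpre : (fun ω (v : V) => X v ω) ⁻¹' (Set.univ.pi s) = ⋂ v, X v ⁻¹' s v := by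
    ext ω; simp [Set.mem_univ_pi]
  rw [hpre, indepX.meas_iInter fun v => ⟨s v, hs v, rfl⟩]
  refine Finset.prod_congr rfl fun v _ => ?_
  rw [← lawX v, Measure.map_apply (measX v) (hs v)]

/-- Permutation symmetry of the product measure: each coordinate in `S` is equally
likely to dominate `S`. -/
lemma pi_sym {V : Type*} [Fintype V] (ν : Measure ℝ) [SigmaFinite ν]
    (S : Set V) {v w : V} (hv : v ∈ S) (hw : w ∈ S) :
    Measure.pi (fun _ : V => ν) {x | ∀ u ∈ S, x u ≤ x v}
      = Measure.pi (fun _ : V => ν) {x | ∀ u ∈ S, x u ≤ x w} := by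
  classical
  have hswap : ∀ u ∈ S, Equiv.swap v w u ∈ S := by
    intro u hu
    rcases eq_or_ne u v with rfl | huv
    · simpa [Equiv.swap_apply_left] using hw
    rcases eq_or_ne u w with rfl | huw
    · simpa [Equiv.swap_apply_right] using hv
    · rwa [Equiv.swap_apply_of_ne_of_ne huv huw]
  have hms : MeasurableSet {x : V → ℝ | ∀ u ∈ S, x u ≤ x w} := by
    have : {x : V → ℝ | ∀ u ∈ S, x u ≤ x w} = ⋂ u ∈ S, {x | x u ≤ x w} := by
      ext x; simp
    rw [this]
    exact MeasurableSet.biInter S.to_countable fun u _ =>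
      measurableSet_le (measurable_pi_apply u) (measurable_pi_apply w)
  have hmp := MeasureTheory.measurePreserving_piCongrLeft (fun _ : V => ν) (Equiv.swap v w)
  rw [← hmp.measure_preimage hms.nullMeasurableSet]
  congr 1
  have hT : ∀ (x : V → ℝ) (u : V),
      (MeasurableEquiv.piCongrLeft (fun _ : V => ℝ) (Equiv.swap v w)) x u
        = x (Equiv.swap v w u) := by
    intro x u
    have h1 : (Equiv.piCongrLeft (fun _ : V => ℝ) (Equiv.swap v w)) x
        (Equiv.swap v w (Equiv.swap v w u)) = x (Equiv.swap v w u) :=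
      Equiv.piCongrLeft_apply_apply (fun _ : V => ℝ) (Equiv.swap v w) x (Equiv.swap v w u)
    rw [Equiv.swap_apply_self] at h1
    rw [MeasurableEquiv.coe_piCongrLeft]
    exact h1
  ext x
  simp only [Set.mem_preimage, Set.mem_setOf_eq, hT]
  constructor
  · intro h u hu
    rw [Equiv.swap_apply_right]
    exact h (Equiv.swap v w u) (hswap u hu)
  · intro h u hu
    have := h (Equiv.swap v w u) (hswap u hu)
    rwa [Equiv.swap_apply_self, Equiv.swap_apply_right] at this

/-- Under 1-hop-max RGCR with independent cluster-level
randomization at treatment probability `p ∈ (0,1)`, on a graph with maximum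
degree `d_max` and restricted growth coefficient `κ`, for every node `i`:
`P(E_i^1) ≥ p / ((1 + d_max) κ)` and `P(E_i^0) ≥ (1-p) / ((1 + d_max) κ)`. -/
theorem exposure_prob_lower_bound_growth
    {V Ω : Type*} [Fintype V] [MeasurableSpace Ω]
    (G : SimpleGraph V) [DecidableRel G.Adj]
    (μ : Measure Ω) [IsProbabilityMeasure μ]
    (X : V → Ω → ℝ) (Z : V → Ω → Bool) (p : ℝ) (hp : p ∈ Set.Ioo (0:ℝ) 1)
    (hmodel : RGCRModel X Z μ p)
    (κ : ℝ)
    (hκ : ∀ (j : V) (r : ℕ), 1 ≤ r →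
      ((hopBall G j (r + 1)).ncard : ℝ) ≤ κ * ((hopBall G j r).ncard : ℝ))
    (i : V) :
    ENNReal.ofReal (p / ((1 + (G.maxDegree : ℝ)) * κ)) ≤ μ (exposure G X Z true i) ∧
    ENNReal.ofReal ((1 - p) / ((1 + (G.maxDegree : ℝ)) * κ)) ≤ μ (exposure G X Z false i) := by
  classical
  set S : Set V := hopBall G i 2 with hS
  set T : Finset V := S.toFinite.toFinset with hT
  have hiS : i ∈ S := by
    simp [hS, hopBall, SimpleGraph.edist_self]
  have hiT : i ∈ T := (S.toFinite.mem_toFinset).2 hiS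
  set F : Ω → V → ℝ := fun ω v => X v ω with hF
  have hFm : Measurable F := measurable_pi_lambda _ fun v => hmodel.meas_X v
  set sset : V → Set (V → ℝ) := fun v => {x | ∀ u ∈ S, x u ≤ x v} with hsset
  have hms : ∀ v : V, MeasurableSet (sset v) := by
    intro v
    have : sset v = ⋂ u ∈ S, {x | x u ≤ x v} := by ext x; simp [hsset]
    rw [this]
    exact MeasurableSet.biInter S.to_countable fun u _ =>
      measurableSet_le (measurable_pi_apply u) (measurable_pi_apply v)
  have hmap : ∀ v : V, μ (F ⁻¹' sset v)
      = Measure.pi (fun _ : V => volume.restrict (Set.Icc (0:ℝ) 1)) (sset v) := by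
    intro v
    rw [← rgcr_joint_law μ X hmodel.meas_X hmodel.law_X hmodel.indep_X,
      Measure.map_apply hFm (hms v)]
  -- cover
  have hcover : (Set.univ : Set Ω) ⊆ ⋃ v ∈ T, F ⁻¹' sset v := by
    intro ω _
    obtain ⟨v, hvT, hvmax⟩ := T.exists_max_image (fun u => X u ω) ⟨i, hiT⟩
    refine Set.mem_biUnion hvT ?_
    intro u hu
    exact hvmax u ((S.toFinite.mem_toFinset).2 hu)
  have hsum : (1 : ℝ≥0∞) ≤ (T.card : ℝ≥0∞) * μ (F ⁻¹' sset i) := by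
    calc (1 : ℝ≥0∞) = μ Set.univ := measure_univ.symm
      _ ≤ μ (⋃ v ∈ T, F ⁻¹' sset v) := measure_mono hcover
      _ ≤ ∑ v ∈ T, μ (F ⁻¹' sset v) := measure_biUnion_finset_le T _
      _ = ∑ v ∈ T, μ (F ⁻¹' sset i) := by
          refine Finset.sum_congr rfl fun v hv => ?_
          rw [hmap v, hmap i]
          exact pi_sym _ S ((S.toFinite.mem_toFinset).1 hv) hiS
      _ = (T.card : ℝ≥0∞) * μ (F ⁻¹' sset i) := by
          rw [Finset.sum_const, nsmul_eq_mul]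
  -- cardinal bounds
  have hn_eq : S.ncard = T.card := Set.ncard_eq_toFinset_card S S.toFinite
  have hn1 : 1 ≤ T.card := Finset.card_pos.2 ⟨i, hiT⟩
  have hball1 : ((hopBall G i 1).ncard : ℝ) ≤ 1 + (G.maxDegree : ℝ) := by
    have hsub : hopBall G i 1 ⊆ insert i (G.neighborSet i) := by
      intro j hj
      have hj' : G.edist i j ≤ 1 := hj
      rcases eq_or_ne (G.edist i j) 0 with h0 | h0
      · left; exact (SimpleGraph.edist_eq_zero_iff.1 h0).symm
      · right
        have h1 : 1 ≤ G.edist i j := ENat.one_le_iff_ne_zero.2 h0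
        have : G.edist i j = 1 := le_antisymm hj' h1
        exact SimpleGraph.edist_eq_one_iff_adj.1 this
    have h1 : (hopBall G i 1).ncard ≤ (insert i (G.neighborSet i)).ncard :=
      Set.ncard_le_ncard hsub (Set.toFinite _)
    have h2 : (insert i (G.neighborSet i)).ncard ≤ (G.neighborSet i).ncard + 1 :=
      Set.ncard_insert_le _ _
    have h3 : (G.neighborSet i).ncard = G.degree i := by
      rw [Set.ncard_eq_toFinset_card']
      simp [SimpleGraph.neighborFinset_def, SimpleGraph.degree]
    have h4 : G.degree i ≤ G.maxDegree := G.degree_le_maxDegree i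
    have : (hopBall G i 1).ncard ≤ G.maxDegree + 1 := by omega
    calc ((hopBall G i 1).ncard : ℝ) ≤ ((G.maxDegree + 1 : ℕ) : ℝ) := by exact_mod_cast this
      _ = 1 + (G.maxDegree : ℝ) := by push_cast; ring
  have hκ2 : ((hopBall G i 2).ncard : ℝ) ≤ κ * ((hopBall G i 1).ncard : ℝ) := by
    have := hκ i 1 le_rfl
    norm_num at this ⊢
    exact this
  have hb1pos : (0 : ℝ) ≤ ((hopBall G i 1).ncard : ℝ) := by positivity
  have hnreal : (1 : ℝ) ≤ (T.card : ℝ) := by exact_mod_cast hn1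
  have hSn : ((hopBall G i 2).ncard : ℝ) = (T.card : ℝ) := by
    rw [← hS, hn_eq]
  have hκpos : 0 < κ := by nlinarith
  have hcard_le : (T.card : ℝ) ≤ (1 + (G.maxDegree : ℝ)) * κ := by nlinarith
  -- main per-arm bound
  have key : ∀ (b : Bool) (q : ℝ), 0 ≤ q → ENNReal.ofReal q ≤ μ {ω | Z i ω = b} →
      ENNReal.ofReal (q / ((1 + (G.maxDegree : ℝ)) * κ)) ≤ μ (exposure G X Z b i) := by
    intro b q hq hZq
    set FZ : Ω → V → Bool := fun ω v => Z v ω with hFZ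
    have hZset : {ω | Z i ω = b} = FZ ⁻¹' {z | z i = b} := rfl
    have hmsZ : MeasurableSet {z : V → Bool | z i = b} := by
      have : {z : V → Bool | z i = b} = (fun z : V → Bool => z i) ⁻¹' {b} := rfl
      rw [this]
      exact measurable_pi_apply i (measurableSet_singleton b)
    -- A ∩ B ⊆ exposure
    have hsub : F ⁻¹' sset i ∩ FZ ⁻¹' {z | z i = b} ⊆ exposure G X Z b i := by
      rintro ω ⟨hA, hB⟩ j hj
      refine ⟨i, ?_, ?_, hB⟩
      · show G.edist j i ≤ 1
        rw [SimpleGraph.edist_comm]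
        exact hj
      · intro u hu
        have hju : G.edist j u ≤ 1 := hu
        have hij : G.edist i j ≤ 1 := hj
        have htri : G.edist i u ≤ G.edist i j + G.edist j u := SimpleGraph.edist_triangle
        have huS : u ∈ S := by
          show G.edist i u ≤ (2 : ℕ)
          calc G.edist i u ≤ G.edist i j + G.edist j u := htri
            _ ≤ 1 + 1 := add_le_add hij hju
            _ = (2 : ℕ) := by norm_num
        exact hA u huS
    have hindep : μ (F ⁻¹' sset i ∩ FZ ⁻¹' {z | z i = b})
        = μ (F ⁻¹' sset i) * μ (FZ ⁻¹' {z | z i = b}) :=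
      hmodel.indep_XZ.measure_inter_preimage_eq_mul (sset i) {z | z i = b} (hms i) hmsZ
    have hninv : ((T.card : ℝ≥0∞))⁻¹ ≤ μ (F ⁻¹' sset i) := by
      have hn0 : (T.card : ℝ≥0∞) ≠ 0 := by
        simp only [ne_eq, Nat.cast_eq_zero]; omega
      have hnt : (T.card : ℝ≥0∞) ≠ ⊤ := ENNReal.natCast_ne_top _
      calc ((T.card : ℝ≥0∞))⁻¹ = (T.card : ℝ≥0∞)⁻¹ * 1 := (mul_one _).symm
        _ ≤ (T.card : ℝ≥0∞)⁻¹ * ((T.card : ℝ≥0∞) * μ (F ⁻¹' sset i)) := by gcongr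
        _ = μ (F ⁻¹' sset i) := by
            rw [← mul_assoc, ENNReal.inv_mul_cancel hn0 hnt, one_mul]
    have hcast : ENNReal.ofReal ((T.card : ℝ)) = (T.card : ℝ≥0∞) := by
      simp
    calc ENNReal.ofReal (q / ((1 + (G.maxDegree : ℝ)) * κ))
        ≤ ENNReal.ofReal (q / (T.card : ℝ)) := by
          apply ENNReal.ofReal_le_ofReal
          gcongr
      _ = ENNReal.ofReal q / (T.card : ℝ≥0∞) := by
          rw [ENNReal.ofReal_div_of_pos (by linarith), hcast]
      _ = ((T.card : ℝ≥0∞))⁻¹ * ENNReal.ofReal q := by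
          rw [div_eq_mul_inv, mul_comm]
      _ ≤ μ (F ⁻¹' sset i) * μ {ω | Z i ω = b} := by
          exact mul_le_mul' hninv hZq
      _ = μ (F ⁻¹' sset i ∩ FZ ⁻¹' {z | z i = b}) := by rw [hindep, hZset]
      _ ≤ μ (exposure G X Z b i) := measure_mono hsub
  obtain ⟨hp0, hp1⟩ := hp
  constructor
  · exact key true p hp0.le (le_of_eq (hmodel.law_Z i).symm)
  · refine key false (1 - p) (by linarith) ?_
    have hcompl : {ω | Z i ω = false} = {ω | Z i ω = true}ᶜ := by
      ext ω; cases h : Z i ω <;> simp [h]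
    have hmsT : MeasurableSet {ω | Z i ω = true} :=
      (hmodel.meas_Z i) (measurableSet_singleton true)
    rw [hcompl, measure_compl hmsT (measure_ne_top μ _), measure_univ, hmodel.law_Z i,
      ← ENNReal.ofReal_one, ← ENNReal.ofReal_sub 1 hp0.le]
end
end

section
/- Consider the 1-hop-max RGCR scheme with independent cluster-level randomization at treatment probability p ∈ (0,1) on a graph with n nodes, and suppose every potential outcome satisfies 0 ≤ Y_i(1) ≤ Ȳ. Then the variance of the Horvitz–Thompson mean-outcome estimator satisfies Var(μ̂(1)) ≤ (Ȳ²/n²) ∑_{i=1}^n |B_4(i)| / P(E_i^1). -/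
open MeasureTheory ProbabilityTheory Filter SimpleGraph Set

noncomputable section

section Aux

variable {V Ω : Type*} [Fintype V] [DecidableEq V] [MeasurableSpace Ω] {G : SimpleGraph V}
  {X : V → Ω → ℝ} {Z : V → Ω → Bool} {μ : Measure Ω} {p : ℝ}

lemma hopBall_trans {i j u : V} {a b : ℕ} (hj : j ∈ hopBall G i a) (hu : u ∈ hopBall G j b) :
    u ∈ hopBall G i (a + b) := by
  simp only [hopBall, Set.mem_setOf_eq] at *
  calc G.edist i u ≤ G.edist i j + G.edist j u := G.edist_triangle
    _ ≤ (a : ℕ∞) + (b : ℕ∞) := add_le_add hj hu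
    _ = ((a + b : ℕ) : ℕ∞) := by push_cast; rfl

/-- finite 2-ball as a finset -/
def ball2 (G : SimpleGraph V) (i : V) : Finset V :=
  (Set.toFinite (hopBall G i 2)).toFinset

lemma mem_ball2 {i j u : V} (hj : j ∈ hopBall G i 1) (hu : u ∈ hopBall G j 1) :
    u ∈ ball2 G i := by
  rw [ball2, Set.Finite.mem_toFinset]
  exact hopBall_trans hj hu

lemma ball2_disjoint {i j : V} (h : ¬ j ∈ hopBall G i 4) :
    Disjoint (ball2 G i) (ball2 G j) := by
  rw [Finset.disjoint_left]
  intro v hvi hvj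
  rw [ball2, Set.Finite.mem_toFinset] at hvi hvj
  apply h
  simp only [hopBall, Set.mem_setOf_eq] at *
  calc G.edist i j ≤ G.edist i v + G.edist v j := G.edist_triangle
    _ ≤ (2 : ℕ∞) + (2 : ℕ∞) := by
        refine add_le_add hvi ?_
        rw [G.edist_comm]
        exact_mod_cast hvj
    _ = ((4 : ℕ) : ℕ∞) := by norm_num

/-- extend a function on the 2-ball to all of `V` -/
def extendB (s : Finset V) (g : s → ℝ × Bool) : V → ℝ × Bool :=
  fun u => if h : u ∈ s then g ⟨u, h⟩ else (0, false)

lemma measurable_extendB (s : Finset V) : Measurable (fun g : s → ℝ × Bool => extendB s g) := by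
  apply measurable_pi_lambda
  intro u
  by_cases h : u ∈ s
  · simpa only [extendB, dif_pos h] using measurable_pi_apply (⟨u, h⟩ : s)
  · simp only [extendB, dif_neg h]
    exact measurable_const

/-- the exposure formula as a set of total functions `V → ℝ × Bool` -/
def exposureSet (G : SimpleGraph V) (b : Bool) (i : V) : Set (V → ℝ × Bool) :=
  {f | ∀ j ∈ hopBall G i 1, ∃ v ∈ hopBall G j 1,
      (∀ u ∈ hopBall G j 1, (f u).1 ≤ (f v).1) ∧ (f v).2 = b}

lemma measurableSet_exposureSet (G : SimpleGraph V) (b : Bool) (i : V) :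
    MeasurableSet (exposureSet G b i) := by
  have : exposureSet G b i = ⋂ j ∈ hopBall G i 1, ⋃ v ∈ hopBall G j 1,
      ((⋂ u ∈ hopBall G j 1, {f : V → ℝ × Bool | (f u).1 ≤ (f v).1}) ∩
        {f : V → ℝ × Bool | (f v).2 = b}) := by
    ext f
    simp only [exposureSet, Set.mem_setOf_eq, Set.mem_iInter, Set.mem_iUnion, Set.mem_inter_iff, exists_prop]
  rw [this]
  refine MeasurableSet.biInter (Set.to_countable _) fun j _ => ?_
  refine MeasurableSet.biUnion (Set.to_countable _) fun v _ => ?_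
  refine MeasurableSet.inter ?_ ?_
  · refine MeasurableSet.biInter (Set.to_countable _) fun u _ => ?_
    exact measurableSet_le ((measurable_pi_apply u).fst) ((measurable_pi_apply v).fst)
  · exact (measurable_pi_apply v).snd (measurableSet_singleton b)

lemma exposure_eq_preimage (G : SimpleGraph V) (X : V → Ω → ℝ) (Z : V → Ω → Bool)
    (b : Bool) (i : V) :
    exposure G X Z b i =
      (fun ω (v : ball2 G i) => (X (v : V) ω, Z (v : V) ω)) ⁻¹'
        ((fun g : ball2 G i → ℝ × Bool => extendB (ball2 G i) g) ⁻¹' exposureSet G b i) := by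
  ext ω
  simp only [Set.mem_preimage, exposure, exposureSet, Set.mem_setOf_eq]
  have hf : ∀ u, u ∈ ball2 G i →
      extendB (ball2 G i) (fun v : ball2 G i => (X (v : V) ω, Z (v : V) ω)) u
        = (X u ω, Z u ω) := by
    intro u hu
    simp only [extendB, dif_pos hu]
  constructor
  · intro h j hj
    obtain ⟨v, hv, hmax, hz⟩ := h j hj
    refine ⟨v, hv, fun u hu => ?_, ?_⟩
    · rw [hf u (mem_ball2 hj hu), hf v (mem_ball2 hj hv)]
      exact hmax u hu
    · rw [hf v (mem_ball2 hj hv)]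
      exact hz
  · intro h j hj
    obtain ⟨v, hv, hmax, hz⟩ := h j hj
    refine ⟨v, hv, fun u hu => ?_, ?_⟩
    · have := hmax u hu
      rwa [hf u (mem_ball2 hj hu), hf v (mem_ball2 hj hv)] at this
    · rw [hf v (mem_ball2 hj hv)] at hz
      exact hz

end Aux

section Indep

variable {V Ω : Type*} [Fintype V] [DecidableEq V] [MeasurableSpace Ω] {G : SimpleGraph V}
  {X : V → Ω → ℝ} {Z : V → Ω → Bool} {μ : Measure Ω} {p : ℝ}

lemma iIndepW (hm : RGCRModel X Z μ p) :
    iIndepFun (fun v ω => (X v ω, Z v ω)) μ := by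
  rw [iIndepFun_iff_iIndep]
  refine iIndepSets.iIndep
    (fun v => ((hm.meas_X v).prodMk (hm.meas_Z v)).comap_le)
    (fun v => {t | ∃ A B, MeasurableSet A ∧ MeasurableSet B ∧ t = X v ⁻¹' A ∩ Z v ⁻¹' B})
    (fun v => ?_) (fun v => ?_) ?_
  · rintro t1 ⟨A1, B1, hA1, hB1, rfl⟩ t2 ⟨A2, B2, hA2, hB2, rfl⟩ -
    refine ⟨A1 ∩ A2, B1 ∩ B2, hA1.inter hA2, hB1.inter hB2, ?_⟩
    simp only [Set.preimage_inter]
    ac_rfl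
  · rw [← generateFrom_prod, MeasurableSpace.comap_generateFrom]
    congr 1
    ext t
    simp only [Set.mem_image, Set.mem_image2, Set.mem_setOf_eq]
    constructor
    · rintro ⟨s, ⟨A, hA, B, hB, rfl⟩, rfl⟩
      exact ⟨A, B, hA, hB, (Set.mk_preimage_prod _ _).symm⟩
    · rintro ⟨A, B, hA, hB, rfl⟩
      exact ⟨A ×ˢ B, ⟨A, hA, B, hB, rfl⟩, Set.mk_preimage_prod _ _⟩
  · rw [iIndepSets_iff]
    intro s f hf
    choose A B hA hB hfeq using hf
    set A' : V → Set ℝ := fun v => if h : v ∈ s then A v h else Set.univ with hA'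
    set B' : V → Set Bool := fun v => if h : v ∈ s then B v h else Set.univ with hB'
    have hA'meas : ∀ v, MeasurableSet (A' v) := by
      intro v; rw [hA']; by_cases h : v ∈ s
      · simp only [dif_pos h]; exact hA v h
      · simp only [dif_neg h]; exact MeasurableSet.univ
    have hB'meas : ∀ v, MeasurableSet (B' v) := by
      intro v; rw [hB']; by_cases h : v ∈ s
      · simp only [dif_pos h]; exact hB v h
      · simp only [dif_neg h]; exact MeasurableSet.univ
    have hfeq' : ∀ v ∈ s, f v = X v ⁻¹' A' v ∩ Z v ⁻¹' B' v := by
      intro v hv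
      rw [hfeq v hv, hA', hB']
      simp only [dif_pos hv]
    have hsplit : (⋂ v ∈ s, f v) =
        (⋂ v ∈ s, X v ⁻¹' A' v) ∩ (⋂ v ∈ s, Z v ⁻¹' B' v) := by
      ext ω
      simp only [Set.mem_iInter, Set.mem_inter_iff, Set.mem_preimage]
      constructor
      · intro h
        exact ⟨fun v hv => ((hfeq' v hv ▸ h v hv).1 : _), fun v hv => (hfeq' v hv ▸ h v hv).2⟩
      · intro h v hv
        rw [hfeq' v hv]
        exact ⟨h.1 v hv, h.2 v hv⟩
    have hXset : (⋂ v ∈ s, X v ⁻¹' A' v) =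
        (fun ω v => X v ω) ⁻¹' (⋂ v ∈ s, (fun g : V → ℝ => g v) ⁻¹' A' v) := by
      ext ω; simp [Set.mem_iInter]
    have hZset : (⋂ v ∈ s, Z v ⁻¹' B' v) =
        (fun ω v => Z v ω) ⁻¹' (⋂ v ∈ s, (fun g : V → Bool => g v) ⁻¹' B' v) := by
      ext ω; simp [Set.mem_iInter]
    have hXZ : μ ((⋂ v ∈ s, X v ⁻¹' A' v) ∩ (⋂ v ∈ s, Z v ⁻¹' B' v))
        = μ (⋂ v ∈ s, X v ⁻¹' A' v) * μ (⋂ v ∈ s, Z v ⁻¹' B' v) := by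
      rw [hXset, hZset]
      exact hm.indep_XZ.measure_inter_preimage_eq_mul _ _
        (MeasurableSet.biInter (Set.to_countable _)
          fun v _ => measurable_pi_apply v (hA'meas v))
        (MeasurableSet.biInter (Set.to_countable _)
          fun v _ => measurable_pi_apply v (hB'meas v))
    have hXprod : μ (⋂ v ∈ s, X v ⁻¹' A' v) = ∏ v ∈ s, μ (X v ⁻¹' A' v) :=
      hm.indep_X.measure_inter_preimage_eq_mul s (fun v _ => hA'meas v)
    have hZprod : μ (⋂ v ∈ s, Z v ⁻¹' B' v) = ∏ v ∈ s, μ (Z v ⁻¹' B' v) :=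
      hm.indep_Z.measure_inter_preimage_eq_mul s (fun v _ => hB'meas v)
    have hvertex : ∀ v ∈ s, μ (f v) = μ (X v ⁻¹' A' v) * μ (Z v ⁻¹' B' v) := by
      intro v hv
      have hiv : IndepFun (X v) (Z v) μ := by
        have := hm.indep_XZ.comp (measurable_pi_apply v) (measurable_pi_apply v)
        exact this
      rw [hfeq' v hv]
      exact hiv.measure_inter_preimage_eq_mul _ _ (hA'meas v) (hB'meas v)
    calc μ (⋂ v ∈ s, f v)
        = μ (⋂ v ∈ s, X v ⁻¹' A' v) * μ (⋂ v ∈ s, Z v ⁻¹' B' v) := by rw [hsplit, hXZ]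
      _ = (∏ v ∈ s, μ (X v ⁻¹' A' v)) * ∏ v ∈ s, μ (Z v ⁻¹' B' v) := by rw [hXprod, hZprod]
      _ = ∏ v ∈ s, μ (X v ⁻¹' A' v) * μ (Z v ⁻¹' B' v) := (Finset.prod_mul_distrib).symm
      _ = ∏ v ∈ s, μ (f v) := Finset.prod_congr rfl fun v hv => (hvertex v hv).symm

lemma measurableSet_exposure (hm : RGCRModel X Z μ p) (b : Bool) (i : V) :
    MeasurableSet (exposure G X Z b i) := by
  rw [exposure_eq_preimage]
  have h1 : Measurable (fun ω (v : ball2 G i) => (X (v : V) ω, Z (v : V) ω)) :=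
    measurable_pi_lambda _ fun v => (hm.meas_X (v : V)).prodMk (hm.meas_Z (v : V))
  exact h1 ((measurable_extendB _) (measurableSet_exposureSet G b i))

lemma measure_inter_exposure (hm : RGCRModel X Z μ p) {i j : V} (h : j ∉ hopBall G i 4) :
    μ (exposure G X Z true i ∩ exposure G X Z true j)
      = μ (exposure G X Z true i) * μ (exposure G X Z true j) := by
  have hW := iIndepW hm
  have hmeasW : ∀ v, Measurable (fun ω => (X v ω, Z v ω)) :=
    fun v => (hm.meas_X v).prodMk (hm.meas_Z v)
  have hind := hW.indepFun_finset (ball2 G i) (ball2 G j) (ball2_disjoint h) hmeasW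
  rw [exposure_eq_preimage G X Z true i, exposure_eq_preimage G X Z true j]
  exact hind.measure_inter_preimage_eq_mul _ _
    ((measurable_extendB _) (measurableSet_exposureSet G true i))
    ((measurable_extendB _) (measurableSet_exposureSet G true j))

end Indep


lemma indicator_mul_indicator_one (s t : Set Ω) (ω : Ω) :
    s.indicator (fun _ => (1:ℝ)) ω * t.indicator (fun _ => (1:ℝ)) ω
      = (s ∩ t).indicator (fun _ => (1:ℝ)) ω := by
  by_cases hs : ω ∈ s <;> by_cases ht : ω ∈ t <;>
    simp [Set.indicator_of_mem, Set.indicator_of_notMem, hs, ht, Set.mem_inter_iff]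

lemma variance_sum_indicator_le
    {Ω : Type*} [MeasurableSpace Ω] {μ : Measure Ω} [IsProbabilityMeasure μ]
    {V : Type*} [Fintype V] (E : V → Set Ω) (hEm : ∀ i, MeasurableSet (E i))
    (hpos : ∀ i, 0 < (μ (E i)).toReal)
    (N : V → Set V)
    (hindep : ∀ i j, j ∉ N i → μ (E i ∩ E j) = μ (E i) * μ (E j))
    (Ybar : ℝ) (Y : V → ℝ) (hY : ∀ i, Y i ∈ Set.Icc 0 Ybar) :
    variance (fun ω => (Fintype.card V : ℝ)⁻¹ *
        ∑ i, Y i * (E i).indicator (fun _ => (1:ℝ)) ω / (μ (E i)).toReal) μ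
      ≤ Ybar ^ 2 / (Fintype.card V : ℝ) ^ 2 * ∑ i, ((N i).ncard : ℝ) / (μ (E i)).toReal := by
  classical
  set c : ℝ := (Fintype.card V : ℝ)⁻¹ with hc
  set P : V → ℝ := fun i => (μ (E i)).toReal with hPdef
  have hPi : ∀ i, (μ (E i)).toReal = P i := fun i => rfl
  set m : V → V → ℝ := fun i j => (μ (E i ∩ E j)).toReal with hmdef
  have hPpos : ∀ i, 0 < P i := hpos
  have hPne : ∀ i, P i ≠ 0 := fun i => (hPpos i).ne'
  have hmnonneg : ∀ i j, 0 ≤ m i j := fun i j => ENNReal.toReal_nonneg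
  have hmle : ∀ i j, m i j ≤ P j := fun i j =>
    ENNReal.toReal_mono (measure_ne_top μ _) (measure_mono Set.inter_subset_right)
  have hmeq : ∀ i j, j ∉ N i → m i j = P i * P j := by
    intro i j hj
    show (μ (E i ∩ E j)).toReal = _
    rw [hindep i j hj, ENNReal.toReal_mul]
  have hYnn : ∀ i, 0 ≤ Y i := fun i => (hY i).1
  have hYle : ∀ i, Y i ≤ Ybar := fun i => (hY i).2
  have hIntInd : ∀ s : Set Ω, MeasurableSet s →
      Integrable (s.indicator fun _ => (1:ℝ)) μ :=
    fun s hs => (integrable_const (1:ℝ)).indicator hs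
  have hIndInt : ∀ s : Set Ω, MeasurableSet s →
      ∫ ω, s.indicator (fun _ => (1:ℝ)) ω ∂μ = (μ s).toReal := by
    intro s hs
    rw [integral_indicator_const (1:ℝ) hs, smul_eq_mul, mul_one, measureReal_def]
  have hgrw : ∀ i, (fun ω => Y i * (E i).indicator (fun _ => (1:ℝ)) ω / P i)
      = fun ω => (Y i / P i) * (E i).indicator (fun _ => (1:ℝ)) ω := by
    intro i; funext ω; ring
  have hInt : ∀ i, Integrable
      (fun ω => Y i * (E i).indicator (fun _ => (1:ℝ)) ω / P i) μ := by
    intro i; rw [hgrw i]; exact ((hIntInd _ (hEm i)).const_mul _)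
  have hintf : ∀ i, ∫ ω, Y i * (E i).indicator (fun _ => (1:ℝ)) ω / P i ∂μ = Y i := by
    intro i
    rw [hgrw i, integral_const_mul, hIndInt _ (hEm i), hPi i, div_mul_cancel₀ _ (hPne i)]
  have hmem_i : ∀ i, MemLp
      (fun ω => Y i * (E i).indicator (fun _ => (1:ℝ)) ω / P i) 2 μ := by
    intro i; rw [hgrw i]
    exact ((memLp_const (1:ℝ)).indicator (hEm i)).const_mul _
  simp only [hPi]
  set F : Ω → ℝ := fun ω =>
      c * ∑ i, Y i * (E i).indicator (fun _ => (1:ℝ)) ω / P i with hF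
  have hmemF : MemLp F 2 μ := by
    have h1 := memLp_finset_sum' Finset.univ (fun i (_ : i ∈ Finset.univ) => hmem_i i)
    have h2 := h1.const_mul c
    have heq : F = fun ω =>
        c * (∑ i, fun ω' => Y i * (E i).indicator (fun _ => (1:ℝ)) ω' / P i) ω := by
      funext ω
      simp [hF, Finset.sum_apply]
    rw [heq]
    exact h2
  rw [variance_eq_sub hmemF]
  -- mean
  have hEF : ∫ ω, F ω ∂μ = c * ∑ i, Y i := by
    rw [hF]
    rw [integral_const_mul]
    rw [integral_finset_sum _ (fun i _ => hInt i)]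
    congr 1
    exact Finset.sum_congr rfl fun i _ => hintf i
  -- second moment
  have hFsq : ∀ ω, F ω ^ 2 = c ^ 2 * ∑ i, ∑ j,
      (Y i * Y j / (P i * P j)) * ((E i ∩ E j).indicator (fun _ => (1:ℝ)) ω) := by
    intro ω
    rw [hF, mul_pow]
    congr 1
    rw [sq, Finset.sum_mul_sum]
    refine Finset.sum_congr rfl fun i _ => Finset.sum_congr rfl fun j _ => ?_
    rw [← indicator_mul_indicator_one (E i) (E j) ω]
    ring
  have hIntIJ : ∀ i j : V, Integrable (fun ω =>
      (Y i * Y j / (P i * P j)) * ((E i ∩ E j).indicator (fun _ => (1:ℝ)) ω)) μ :=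
    fun i j => ((hIntInd _ ((hEm i).inter (hEm j))).const_mul _)
  have hEF2 : ∫ ω, F ω ^ 2 ∂μ = c ^ 2 * ∑ i, ∑ j,
      (Y i * Y j / (P i * P j)) * m i j := by
    simp only [hFsq]
    rw [integral_const_mul, integral_finset_sum _
      (fun i _ => integrable_finset_sum _ (fun j _ => hIntIJ i j))]
    congr 1
    refine Finset.sum_congr rfl fun i _ => ?_
    rw [integral_finset_sum _ (fun j _ => hIntIJ i j)]
    refine Finset.sum_congr rfl fun j _ => ?_
    rw [integral_const_mul, hIndInt _ ((hEm i).inter (hEm j))]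
  have hμF2 : μ[F ^ 2] = ∫ ω, F ω ^ 2 ∂μ := by
    refine integral_congr_ae (Filter.Eventually.of_forall fun ω => ?_)
    simp [Pi.pow_apply]
  have hμF : μ[F] = ∫ ω, F ω ∂μ := rfl
  rw [hμF2, hμF, hEF2, hEF]
  -- expand the squared mean
  have hsqmean : (c * ∑ i, Y i) ^ 2 = c ^ 2 * ∑ i, ∑ j, Y i * Y j := by
    rw [mul_pow]
    congr 1
    rw [sq, Finset.sum_mul_sum]
  rw [hsqmean]
  rw [← mul_sub, ← Finset.sum_sub_distrib]
  simp only [← Finset.sum_sub_distrib]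
  -- termwise bound
  have hterm : ∀ i j : V, (Y i * Y j / (P i * P j)) * m i j - Y i * Y j
      ≤ (if j ∈ N i then Ybar ^ 2 / P i else 0) := by
    intro i j
    by_cases hj : j ∈ N i
    · simp only [if_pos hj]
      have hYb : Y i * Y j ≤ Ybar ^ 2 := by
        rw [sq]
        exact mul_le_mul (hYle i) (hYle j) (hYnn j) (le_trans (hYnn i) (hYle i))
      have hxnn : 0 ≤ Y i * Y j / (P i * P j) :=
        div_nonneg (mul_nonneg (hYnn i) (hYnn j))
          (mul_nonneg (hPpos i).le (hPpos j).le)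
      have h1 : (Y i * Y j / (P i * P j)) * m i j ≤ Ybar ^ 2 / P i := by
        calc (Y i * Y j / (P i * P j)) * m i j
            ≤ (Y i * Y j / (P i * P j)) * P j :=
              mul_le_mul_of_nonneg_left (hmle i j) hxnn
          _ = Y i * Y j / P i := by
              field_simp [hPne i, hPne j]
          _ ≤ Ybar ^ 2 / P i := by gcongr
              
      have h2 : 0 ≤ Y i * Y j := mul_nonneg (hYnn i) (hYnn j)
      linarith
    · simp only [if_neg hj]
      rw [hmeq i j hj]
      have : (Y i * Y j / (P i * P j)) * (P i * P j) = Y i * Y j :=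
        div_mul_cancel₀ _ (mul_ne_zero (hPne i) (hPne j))
      rw [this, sub_self]
  have hsum : ∀ i : V, (∑ j, if j ∈ N i then Ybar ^ 2 / P i else 0)
      = ((N i).ncard : ℝ) * (Ybar ^ 2 / P i) := by
    intro i
    have hfin : (N i).Finite := Set.toFinite _
    have hmem : ∀ j, (j ∈ N i) = (j ∈ hfin.toFinset) := by
      intro j; simp [Set.Finite.mem_toFinset]
    simp only [hmem]
    rw [Finset.sum_ite_mem, Finset.univ_inter, Finset.sum_const, nsmul_eq_mul,
      Set.ncard_eq_toFinset_card _ hfin]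
  calc c ^ 2 * ∑ i, ∑ j, ((Y i * Y j / (P i * P j)) * m i j - Y i * Y j)
      ≤ c ^ 2 * ∑ i, ∑ j, (if j ∈ N i then Ybar ^ 2 / P i else 0) := by
        refine mul_le_mul_of_nonneg_left ?_ (sq_nonneg c)
        exact Finset.sum_le_sum fun i _ => Finset.sum_le_sum fun j _ => hterm i j
    _ = c ^ 2 * ∑ i, ((N i).ncard : ℝ) * (Ybar ^ 2 / P i) := by
        congr 1
        exact Finset.sum_congr rfl fun i _ => hsum i
    _ = Ybar ^ 2 / (Fintype.card V : ℝ) ^ 2 * ∑ i, ((N i).ncard : ℝ) / P i := by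
        rw [hc, Finset.mul_sum, Finset.mul_sum]
        refine Finset.sum_congr rfl fun i _ => ?_
        ring

/-- Under 1-hop-max RGCR with independent cluster-level
randomization at treatment probability `p ∈ (0,1)`, if all potential outcomes
satisfy `0 ≤ Y i ≤ Ȳ`, then the variance of the Horvitz–Thompson mean-outcome
estimator `μ̂(1) = (1/n) ∑ᵢ Y i · 1{E_i^1} / P(E_i^1)` satisfies
`Var(μ̂(1)) ≤ (Ȳ²/n²) ∑ᵢ |B₄(i)| / P(E_i^1)`. -/
theorem ht_variance_upper_bound
    {V Ω : Type*} [Fintype V] [MeasurableSpace Ω]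
    (G : SimpleGraph V) (μ : Measure Ω) [IsProbabilityMeasure μ]
    (X : V → Ω → ℝ) (Z : V → Ω → Bool) (p : ℝ) (hp : p ∈ Set.Ioo (0:ℝ) 1)
    (hmodel : RGCRModel X Z μ p)
    (Ybar : ℝ) (Y : V → ℝ) (hY : ∀ i, Y i ∈ Set.Icc 0 Ybar)
    (hpos : ∀ i : V, 0 < μ (exposure G X Z true i)) :
    variance (fun ω => (Fintype.card V : ℝ)⁻¹ *
        ∑ i : V, Y i * (exposure G X Z true i).indicator (fun _ => (1:ℝ)) ω /
          (μ (exposure G X Z true i)).toReal) μ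
      ≤ Ybar ^ 2 / (Fintype.card V : ℝ) ^ 2 *
        ∑ i : V, ((hopBall G i 4).ncard : ℝ) / (μ (exposure G X Z true i)).toReal := by
  classical
  exact variance_sum_indicator_le (fun i => exposure G X Z true i)
    (fun i => measurableSet_exposure hmodel true i)
    (fun i => ENNReal.toReal_pos (hpos i).ne' (measure_ne_top μ _))
    (fun i => hopBall G i 4)
    (fun i j hj => measure_inter_exposure hmodel hj)
    Ybar Y hY
end
end

section
/- Consider the 1-hop-max RGCR scheme with independent cluster-level randomization at treatment probability p ∈ (0,1), on a graph with n nodes, maximum degree d_max, and restricted growth coefficient κ, and suppose every potential outcome satisfies 0 ≤ Y_i(1) ≤ Ȳ and 0 ≤ Y_i(0) ≤ Ȳ. Then the variance of the Horvitz–Thompson GATE estimator satisfies Var(τ̂) ≤ (2/n) · Ȳ² (d_max + 1)² κ⁴ (p^{−1} + (1−p)^{−1}). -/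
open MeasureTheory ProbabilityTheory Filter SimpleGraph Set

noncomputable section

/-! ### Auxiliary development -/

namespace RGCRProof

open MeasurableSpace
open scoped ENNReal

set_option linter.unusedSectionVars false

section Graph

variable {V : Type*} {G : SimpleGraph V}

lemma mem_hopBall_self (G : SimpleGraph V) (i : V) (r : ℕ) : i ∈ hopBall G i r := by
  simp [hopBall, SimpleGraph.edist_self]

lemma mem_hopBall_comm {i j : V} {r : ℕ} : j ∈ hopBall G i r ↔ i ∈ hopBall G j r := by
  simp [hopBall, SimpleGraph.edist_comm]

lemma hopBall_subset {i j : V} {r s : ℕ} (hj : j ∈ hopBall G i r) :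
    hopBall G j s ⊆ hopBall G i (r + s) := by
  intro u hu
  simp only [hopBall, Set.mem_setOf_eq] at *
  calc G.edist i u ≤ G.edist i j + G.edist j u := G.edist_triangle
    _ ≤ (r : ℕ∞) + (s : ℕ∞) := add_le_add hj hu
    _ = ((r + s : ℕ) : ℕ∞) := by push_cast; ring

lemma hopBall_disjoint {i j : V} (h : ¬ G.edist i j ≤ 4) :
    Disjoint (hopBall G i 2) (hopBall G j 2) := by
  rw [Set.disjoint_left]
  intro u hu hu'
  apply h
  have h1 : u ∈ hopBall G i 2 := hu
  have h2 : j ∈ hopBall G u 2 := mem_hopBall_comm.mp hu'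
  have := hopBall_subset h1 h2
  simpa [hopBall] using this

lemma one_le_ncard_hopBall [Fintype V] (i : V) (r : ℕ) : 1 ≤ (hopBall G i r).ncard := by
  have hne : (hopBall G i r).Nonempty := ⟨i, mem_hopBall_self G i r⟩
  rw [Nat.one_le_iff_ne_zero]
  intro h
  rw [Set.ncard_eq_zero (Set.toFinite _)] at h
  exact Set.nonempty_iff_ne_empty.mp hne h

lemma ncard_hopBall_one_le [Fintype V] [DecidableRel G.Adj] (i : V) :
    (hopBall G i 1).ncard ≤ G.maxDegree + 1 := by
  have hsub : hopBall G i 1 ⊆ insert i (G.neighborSet i) := by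
    intro j hj
    simp only [hopBall, Set.mem_setOf_eq] at hj
    rcases eq_or_ne (G.edist i j) 0 with h0 | h0
    · left; exact (SimpleGraph.edist_eq_zero_iff.mp h0).symm
    · right
      have h1 : G.edist i j = 1 := le_antisymm hj (ENat.one_le_iff_ne_zero.mpr h0)
      exact SimpleGraph.edist_eq_one_iff_adj.mp h1
  calc (hopBall G i 1).ncard ≤ (insert i (G.neighborSet i)).ncard :=
        Set.ncard_le_ncard hsub (Set.toFinite _)
    _ ≤ (G.neighborSet i).ncard + 1 := Set.ncard_insert_le _ _
    _ ≤ G.maxDegree + 1 := by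
        have : (G.neighborSet i).ncard = G.degree i := by
          rw [Set.ncard_eq_toFinset_card']
          simp [SimpleGraph.neighborFinset, SimpleGraph.degree,
            SimpleGraph.neighborFinset_eq_filter]
        rw [this]
        exact Nat.add_le_add_right (G.degree_le_maxDegree i) 1

end Graph

/-- The uniform distribution on `[0,1]`. -/
def unif : Measure ℝ := volume.restrict (Set.Icc (0:ℝ) 1)

instance : IsProbabilityMeasure (unif) :=
  ⟨by simp [unif, Real.volume_Icc]⟩

variable {V Ω : Type*} [Fintype V] [MeasurableSpace Ω] {μ : Measure Ω} [IsProbabilityMeasure μ]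
variable {X : V → Ω → ℝ} {Z : V → Ω → Bool} {p : ℝ}

lemma map_bundleX (h : RGCRModel X Z μ p) :
    μ.map (fun ω (v : V) => X v ω) = Measure.pi (fun _ => unif) := by
  refine (Measure.pi_eq fun s hs => ?_).symm
  rw [Measure.map_apply (measurable_pi_lambda _ h.meas_X) (MeasurableSet.univ_pi hs)]
  have hpre : (fun ω (v : V) => X v ω) ⁻¹' (Set.pi Set.univ s)
      = ⋂ v ∈ Finset.univ, X v ⁻¹' (s v) := by
    ext ω; simp
  rw [hpre, h.indep_X.measure_inter_preimage_eq_mul Finset.univ (fun v _ => hs v)]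
  refine Finset.prod_congr rfl fun v _ => ?_
  rw [show unif = volume.restrict (Set.Icc (0:ℝ) 1) from rfl, ← h.law_X v,
    Measure.map_apply (h.meas_X v) (hs v)]

lemma measurableSet_maxSet (S : Set V) (u : V) :
    MeasurableSet {x : V → ℝ | ∀ u' ∈ S, x u' ≤ x u} := by
  have : {x : V → ℝ | ∀ u' ∈ S, x u' ≤ x u} = ⋂ u' ∈ S, {x | x u' ≤ x u} := by
    ext x; simp
  rw [this]
  exact MeasurableSet.biInter (S.to_countable) fun u' _ =>
    measurableSet_le (measurable_pi_apply _) (measurable_pi_apply _)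

lemma measure_maxEvent_eq (h : RGCRModel X Z μ p) {S : Set V} {v w : V}
    (hv : v ∈ S) (hw : w ∈ S) :
    μ {ω | ∀ u ∈ S, X u ω ≤ X v ω} = μ {ω | ∀ u ∈ S, X u ω ≤ X w ω} := by
  classical
  have hXmeas : Measurable (fun ω (v : V) => X v ω) := measurable_pi_lambda _ h.meas_X
  have key : ∀ u : V, μ {ω | ∀ u' ∈ S, X u' ω ≤ X u ω}
      = Measure.pi (fun _ : V => unif) {x : V → ℝ | ∀ u' ∈ S, x u' ≤ x u} := by
    intro u
    rw [← map_bundleX h, Measure.map_apply hXmeas (measurableSet_maxSet S u)]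
    rfl
  rw [key v, key w]
  set e := Equiv.swap v w with he
  set T := MeasurableEquiv.piCongrLeft (fun _ : V => ℝ) e with hT
  have hswap : (Measure.pi (fun _ : V => unif)).map T = Measure.pi (fun _ : V => unif) := by
    exact Measure.pi_map_piCongrLeft (β := fun _ : V => ℝ) e (fun _ => unif)
  have hTapp : ∀ (x : V → ℝ) (j : V), T x j = x (e j) := by
    intro x j
    have h1 : T x (e (e.symm j)) = x (e.symm j) := by
      rw [hT]
      exact Equiv.piCongrLeft_apply_apply (fun _ : V => ℝ) e x (e.symm j)
    rw [e.apply_symm_apply] at h1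
    rw [h1, he, Equiv.symm_swap]
  have heS : ∀ u, u ∈ S → e u ∈ S := by
    intro u hu
    rcases eq_or_ne u v with rfl | huv
    · rw [he]; simpa [Equiv.swap_apply_left] using hw
    rcases eq_or_ne u w with rfl | huw
    · rw [he]; simpa [Equiv.swap_apply_right] using hv
    · rw [he]; simpa [Equiv.swap_apply_of_ne_of_ne huv huw] using hu
  have hpre : T ⁻¹' {x : V → ℝ | ∀ u' ∈ S, x u' ≤ x w} = {x : V → ℝ | ∀ u' ∈ S, x u' ≤ x v} := by
    ext x
    simp only [Set.mem_preimage, Set.mem_setOf_eq, hTapp]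
    have hew : e w = v := by rw [he]; exact Equiv.swap_apply_right v w
    rw [hew]
    constructor
    · intro hx u hu
      have := hx (e u) (heS u hu)
      rwa [he, Equiv.swap_apply_self] at this
    · intro hx u hu
      exact hx (e u) (heS u hu)
  calc Measure.pi (fun _ : V => unif) {x : V → ℝ | ∀ u' ∈ S, x u' ≤ x v}
      = Measure.pi (fun _ : V => unif) (T ⁻¹' {x : V → ℝ | ∀ u' ∈ S, x u' ≤ x w}) := by rw [hpre]
    _ = ((Measure.pi (fun _ : V => unif)).map T) {x : V → ℝ | ∀ u' ∈ S, x u' ≤ x w} := by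
        rw [Measure.map_apply T.measurable (measurableSet_maxSet S w)]
    _ = Measure.pi (fun _ : V => unif) {x : V → ℝ | ∀ u' ∈ S, x u' ≤ x w} := by rw [hswap]

lemma one_le_ncard_mul_measure_max (h : RGCRModel X Z μ p) {S : Set V} {i : V} (hi : i ∈ S) :
    1 ≤ (S.ncard : ℝ≥0∞) * μ {ω | ∀ u ∈ S, X u ω ≤ X i ω} := by
  classical
  have hfin : S.Finite := S.toFinite
  have hcover : (⋃ v ∈ hfin.toFinset, {ω | ∀ u ∈ S, X u ω ≤ X v ω}) = Set.univ := by
    ext ω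
    simp only [Set.mem_iUnion, Set.mem_univ, iff_true, Set.Finite.mem_toFinset]
    obtain ⟨v, hv, hmax⟩ := Set.exists_max_image S (fun u => X u ω) hfin ⟨i, hi⟩
    exact ⟨v, hv, fun u hu => hmax u hu⟩
  calc (1 : ℝ≥0∞) = μ Set.univ := measure_univ.symm
    _ = μ (⋃ v ∈ hfin.toFinset, {ω | ∀ u ∈ S, X u ω ≤ X v ω}) := by rw [hcover]
    _ ≤ ∑ v ∈ hfin.toFinset, μ {ω | ∀ u ∈ S, X u ω ≤ X v ω} :=
        measure_biUnion_finset_le _ _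
    _ = ∑ v ∈ hfin.toFinset, μ {ω | ∀ u ∈ S, X u ω ≤ X i ω} := by
        refine Finset.sum_congr rfl fun v hv => ?_
        exact measure_maxEvent_eq h (hfin.mem_toFinset.mp hv) hi
    _ = (S.ncard : ℝ≥0∞) * μ {ω | ∀ u ∈ S, X u ω ≤ X i ω} := by
        rw [Finset.sum_const, Set.ncard_eq_toFinset_card _ hfin, nsmul_eq_mul]

lemma iIndepFun_pair (h : RGCRModel X Z μ p) :
    iIndepFun (fun v ω => (X v ω, Z v ω)) μ := by
  classical
  rw [iIndepFun_iff_iIndep]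
  set rects : Set (Set (ℝ × Bool)) :=
    Set.image2 (· ×ˢ ·) {s : Set ℝ | MeasurableSet s} {t : Set Bool | MeasurableSet t} with hrects
  refine iIndepSets.iIndep (fun v => ?_)
    (fun v => Set.preimage (fun ω => (X v ω, Z v ω)) '' rects)
    (fun v => by exact isPiSystem_prod.comap _) (fun v => ?_) ?_
  · exact ((h.meas_X v).prodMk (h.meas_Z v)).comap_le
  · rw [← generateFrom_prod, MeasurableSpace.comap_generateFrom]
  · rw [iIndepSets_iff]
    intro s f' hf'
    have hAB : ∀ i ∈ s, ∃ (A : Set ℝ) (B : Set Bool), MeasurableSet A ∧ MeasurableSet B ∧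
        f' i = X i ⁻¹' A ∩ Z i ⁻¹' B := by
      intro i hi
      obtain ⟨x, hx, hpre⟩ := hf' i hi
      obtain ⟨A, hA, B, hB, rfl⟩ := hx
      refine ⟨A, B, hA, hB, ?_⟩
      rw [← hpre]
      ext ω; simp [Set.mem_prod]
    choose! A B hA hB hf'eq using hAB
    have hXmeasset : MeasurableSet (⋂ i ∈ (s : Set V), (fun x : V → ℝ => x i) ⁻¹' A i) :=
      MeasurableSet.biInter (s : Set V).to_countable fun i hi =>
        (measurable_pi_apply i) (hA i hi)
    have hZmeasset : MeasurableSet (⋂ i ∈ (s : Set V), (fun z : V → Bool => z i) ⁻¹' B i) :=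
      MeasurableSet.biInter (s : Set V).to_countable fun i hi =>
        (measurable_pi_apply i) (hB i hi)
    have hsplit : (⋂ i ∈ s, f' i)
        = ((fun ω (v : V) => X v ω) ⁻¹' (⋂ i ∈ (s : Set V), (fun x : V → ℝ => x i) ⁻¹' A i))
          ∩ ((fun ω (v : V) => Z v ω) ⁻¹'
              (⋂ i ∈ (s : Set V), (fun z : V → Bool => z i) ⁻¹' B i)) := by
      ext ω
      simp only [Set.mem_iInter, Set.mem_inter_iff, Set.mem_preimage, Finset.mem_coe]
      constructor
      · intro hω
        constructor
        · intro i hi; have := hω i hi; rw [hf'eq i hi] at this; exact this.1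
        · intro i hi; have := hω i hi; rw [hf'eq i hi] at this; exact this.2
      · rintro ⟨h1, h2⟩ i hi
        rw [hf'eq i hi]; exact ⟨h1 i hi, h2 i hi⟩
    rw [hsplit, h.indep_XZ.measure_inter_preimage_eq_mul _ _ hXmeasset hZmeasset]
    have hXpre : (fun ω (v : V) => X v ω) ⁻¹' (⋂ i ∈ (s : Set V), (fun x : V → ℝ => x i) ⁻¹' A i)
        = ⋂ i ∈ s, X i ⁻¹' A i := by ext ω; simp
    have hZpre : (fun ω (v : V) => Z v ω) ⁻¹' (⋂ i ∈ (s : Set V), (fun z : V → Bool => z i) ⁻¹' B i)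
        = ⋂ i ∈ s, Z i ⁻¹' B i := by ext ω; simp
    rw [hXpre, hZpre,
      h.indep_X.measure_inter_preimage_eq_mul s (fun i hi => hA i hi),
      h.indep_Z.measure_inter_preimage_eq_mul s (fun i hi => hB i hi),
      ← Finset.prod_mul_distrib]
    refine Finset.prod_congr rfl fun i hi => ?_
    have hXZi : IndepFun (X i) (Z i) μ :=
      h.indep_XZ.comp (measurable_pi_apply i) (measurable_pi_apply i)
    rw [hf'eq i hi]
    exact (hXZi.measure_inter_preimage_eq_mul _ _ (hA i hi) (hB i hi)).symm

lemma exposure_comap_measurable {G : SimpleGraph V} (hX : ∀ v, Measurable (X v))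
    (hZ : ∀ v, Measurable (Z v)) (b : Bool) (i : V) (S : Finset V)
    (hS : hopBall G i 2 ⊆ ↑S) :
    MeasurableSet[MeasurableSpace.comap (fun ω (v : S) => (X v ω, Z v ω)) inferInstance]
      (exposure G X Z b i) := by
  classical
  set mS := MeasurableSpace.comap (fun ω (v : S) => (X v ω, Z v ω)) inferInstance with hmS
  have hbasicX : ∀ u v : V, u ∈ S → v ∈ S → MeasurableSet[mS] {ω | X u ω ≤ X v ω} := by
    intro u v hu hv
    refine measurableSet_comap.mpr ⟨{f : S → ℝ × Bool | (f ⟨u, hu⟩).1 ≤ (f ⟨v, hv⟩).1}, ?_, rfl⟩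
    exact measurableSet_le ((measurable_pi_apply _).fst) ((measurable_pi_apply _).fst)
  have hbasicZ : ∀ v : V, (hv : v ∈ S) → MeasurableSet[mS] {ω | Z v ω = b} := by
    intro v hv
    refine measurableSet_comap.mpr ⟨{f : S → ℝ × Bool | (f ⟨v, hv⟩).2 = b}, ?_, rfl⟩
    exact (measurable_pi_apply _).snd (measurableSet_singleton b)
  have hrw : exposure G X Z b i = ⋂ j, ⋂ (_ : j ∈ hopBall G i 1), ⋃ v,
      ⋃ (_ : v ∈ hopBall G j 1),
      ((⋂ u, ⋂ (_ : u ∈ hopBall G j 1), {ω | X u ω ≤ X v ω}) ∩ {ω | Z v ω = b}) := by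
    ext ω
    simp only [exposure, Set.mem_setOf_eq, Set.mem_iInter, Set.mem_iUnion, Set.mem_inter_iff]
    constructor
    · intro hω j hj
      obtain ⟨v, hv, hx, hz⟩ := hω j hj
      exact ⟨v, hv, hx, hz⟩
    · intro hω j hj
      obtain ⟨v, hv, hx, hz⟩ := hω j hj
      exact ⟨v, hv, hx, hz⟩
  rw [hrw]
  refine MeasurableSet.iInter fun j => MeasurableSet.iInter fun hj =>
    MeasurableSet.iUnion fun v => MeasurableSet.iUnion fun hv =>
    MeasurableSet.inter (MeasurableSet.iInter fun u => MeasurableSet.iInter fun hu => ?_) ?_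
  · have hu2 : u ∈ hopBall G i 2 := hopBall_subset hj hu
    have hv2 : v ∈ hopBall G i 2 := hopBall_subset hj hv
    exact hbasicX u v (hS hu2) (hS hv2)
  · exact hbasicZ v (hS (hopBall_subset hj hv))

lemma measurableSet_exposure {G : SimpleGraph V} (hX : ∀ v, Measurable (X v))
    (hZ : ∀ v, Measurable (Z v)) (b : Bool) (i : V) :
    MeasurableSet (exposure G X Z b i) := by
  have hcomap := exposure_comap_measurable (X := X) (Z := Z) (G := G) hX hZ b i Finset.univ
    (by simp)
  have hle : MeasurableSpace.comap
      (fun ω (v : (Finset.univ : Finset V)) => (X v ω, Z v ω)) inferInstance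
        ≤ ‹MeasurableSpace Ω› :=
    (measurable_pi_lambda _ fun v : (Finset.univ : Finset V) =>
      ((hX v).prodMk (hZ v))).comap_le
  exact hle _ hcomap

lemma exposure_indep (h : RGCRModel X Z μ p) {G : SimpleGraph V} {i j : V}
    (hfar : ¬ G.edist i j ≤ 4) (b c : Bool) :
    μ (exposure G X Z b i ∩ exposure G X Z c j)
      = μ (exposure G X Z b i) * μ (exposure G X Z c j) := by
  classical
  set S := (hopBall G i 2).toFinset with hSdef
  set T := (hopBall G j 2).toFinset with hTdef
  have hdisj : Disjoint S T := by
    rw [Finset.disjoint_left]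
    intro u hu hu'
    rw [hSdef, Set.mem_toFinset] at hu
    rw [hTdef, Set.mem_toFinset] at hu'
    exact (hopBall_disjoint hfar).le_bot ⟨hu, hu'⟩
  have hindep := (iIndepFun_pair h).indepFun_finset S T hdisj
    (fun v => (h.meas_X v).prodMk (h.meas_Z v))
  rw [IndepFun_iff_Indep] at hindep
  rw [Indep_iff] at hindep
  refine hindep _ _ ?_ ?_
  · exact exposure_comap_measurable h.meas_X h.meas_Z b i S (by rw [hSdef]; simp)
  · exact exposure_comap_measurable h.meas_X h.meas_Z c j T (by rw [hTdef]; simp)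

lemma measure_bernoulli (h : RGCRModel X Z μ p) (hp0 : 0 ≤ p) (i : V) (b : Bool) :
    μ {ω | Z i ω = b} = ENNReal.ofReal (bif b then p else 1 - p) := by
  cases b
  · have hcompl : {ω | Z i ω = false} = {ω | Z i ω = true}ᶜ := by
      ext ω; simp
    have hmeas : MeasurableSet {ω | Z i ω = true} :=
      h.meas_Z i (measurableSet_singleton true)
    rw [hcompl, prob_compl_eq_one_sub hmeas, h.law_Z i]
    simp only [cond_false]
    rw [ENNReal.ofReal_sub 1 hp0, ENNReal.ofReal_one]
  · exact h.law_Z i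

lemma exposure_superset (G : SimpleGraph V) (b : Bool) (i : V) :
    {ω | ∀ u ∈ hopBall G i 2, X u ω ≤ X i ω} ∩ {ω | Z i ω = b} ⊆ exposure G X Z b i := by
  rintro ω ⟨hmax, hz⟩ j hj
  refine ⟨i, mem_hopBall_comm.mp hj, fun u hu => ?_, hz⟩
  exact hmax u (by simpa using hopBall_subset hj hu)

lemma measure_exposure_ge (h : RGCRModel X Z μ p) (hp : p ∈ Set.Ioo (0:ℝ) 1)
    (G : SimpleGraph V) (b : Bool) (i : V) :
    ENNReal.ofReal (bif b then p else 1 - p)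
      ≤ ((hopBall G i 2).ncard : ℝ≥0∞) * μ (exposure G X Z b i) := by
  set pb := bif b then p else 1 - p with hpb
  have hsA : MeasurableSet {x : V → ℝ | ∀ u ∈ hopBall G i 2, x u ≤ x i} := by
    have : {x : V → ℝ | ∀ u ∈ hopBall G i 2, x u ≤ x i}
        = ⋂ u ∈ hopBall G i 2, {x : V → ℝ | x u ≤ x i} := by ext x; simp
    rw [this]
    exact MeasurableSet.biInter ((hopBall G i 2).to_countable) fun u _ =>
      measurableSet_le (measurable_pi_apply _) (measurable_pi_apply _)
  have hsZ : MeasurableSet {z : V → Bool | z i = b} := by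
    show MeasurableSet ((fun z : V → Bool => z i) ⁻¹' {b})
    exact (measurable_pi_apply i) (measurableSet_singleton b)
  have hfact : μ ({ω | ∀ u ∈ hopBall G i 2, X u ω ≤ X i ω} ∩ {ω | Z i ω = b})
      = μ {ω | ∀ u ∈ hopBall G i 2, X u ω ≤ X i ω} * μ {ω | Z i ω = b} := by
    have := h.indep_XZ.measure_inter_preimage_eq_mul _ _ hsA hsZ
    exact this
  calc ENNReal.ofReal pb = 1 * ENNReal.ofReal pb := (one_mul _).symm
    _ ≤ (((hopBall G i 2).ncard : ℝ≥0∞) * μ {ω | ∀ u ∈ hopBall G i 2, X u ω ≤ X i ω})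
        * ENNReal.ofReal pb := by
        exact mul_le_mul_left (one_le_ncard_mul_measure_max h (mem_hopBall_self G i 2)) _
    _ = ((hopBall G i 2).ncard : ℝ≥0∞)
        * (μ {ω | ∀ u ∈ hopBall G i 2, X u ω ≤ X i ω} * μ {ω | Z i ω = b}) := by
        rw [measure_bernoulli h hp.1.le i b, ← hpb, mul_assoc]
    _ = ((hopBall G i 2).ncard : ℝ≥0∞)
        * μ ({ω | ∀ u ∈ hopBall G i 2, X u ω ≤ X i ω} ∩ {ω | Z i ω = b}) := by rw [hfact]
    _ ≤ ((hopBall G i 2).ncard : ℝ≥0∞) * μ (exposure G X Z b i) :=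
        mul_le_mul_right (measure_mono (exposure_superset G b i)) _

lemma toReal_exposure_ge (h : RGCRModel X Z μ p) (hp : p ∈ Set.Ioo (0:ℝ) 1)
    (G : SimpleGraph V) (b : Bool) (i : V) :
    (bif b then p else 1 - p) / ((hopBall G i 2).ncard : ℝ)
      ≤ (μ (exposure G X Z b i)).toReal := by
  set c : ℝ≥0∞ := ((hopBall G i 2).ncard : ℝ≥0∞) with hc
  have hc0 : c ≠ 0 := by
    simp only [hc, ne_eq, Nat.cast_eq_zero]
    intro hcc
    rw [Set.ncard_eq_zero (Set.toFinite _)] at hcc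
    exact absurd hcc (Set.nonempty_iff_ne_empty.mp ⟨i, mem_hopBall_self G i 2⟩)
  have hctop : c ≠ ⊤ := by simp [hc]
  have hdiv : ENNReal.ofReal (bif b then p else 1 - p) / c ≤ μ (exposure G X Z b i) := by
    rw [ENNReal.div_le_iff hc0 hctop]
    calc ENNReal.ofReal (bif b then p else 1 - p) ≤ c * μ (exposure G X Z b i) :=
          measure_exposure_ge h hp G b i
      _ = μ (exposure G X Z b i) * c := mul_comm _ _
  have := ENNReal.toReal_mono (measure_ne_top μ _) hdiv
  calc (bif b then p else 1 - p) / ((hopBall G i 2).ncard : ℝ)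
      = (ENNReal.ofReal (bif b then p else 1 - p) / c).toReal := by
        rw [ENNReal.toReal_div, ENNReal.toReal_ofReal ?_, hc]
        · simp
        cases b
        · simp only [cond_false]; linarith [hp.2]
        · simp only [cond_true]; linarith [hp.1]
    _ ≤ (μ (exposure G X Z b i)).toReal := this

lemma variance_sub_le {f g : Ω → ℝ} (hf : MemLp f 2 μ) (hg : MemLp g 2 μ) :
    variance (f - g) μ ≤ 2 * variance f μ + 2 * variance g μ := by
  have hfi : Integrable f μ := hf.integrable one_le_two
  have hgi : Integrable g μ := hg.integrable one_le_two
  have hfg : MemLp (f - g) 2 μ := hf.sub hg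
  rw [variance_eq_integral hfg.1.aemeasurable, variance_eq_integral hf.1.aemeasurable,
    variance_eq_integral hg.1.aemeasurable]
  have hm : μ[f - g] = μ[f] - μ[g] := integral_sub hfi hgi
  have hint1 : Integrable (fun x => (f x - g x - μ[f - g]) ^ 2) μ :=
    (hfg.sub (memLp_const _)).integrable_sq
  have hintf : Integrable (fun x => (f x - μ[f]) ^ 2) μ :=
    (hf.sub (memLp_const _)).integrable_sq
  have hintg : Integrable (fun x => (g x - μ[g]) ^ 2) μ :=
    (hg.sub (memLp_const _)).integrable_sq
  show (∫ x, (f x - g x - μ[f - g]) ^ 2 ∂μ)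
      ≤ 2 * (∫ x, (f x - μ[f]) ^ 2 ∂μ) + 2 * (∫ x, (g x - μ[g]) ^ 2 ∂μ)
  calc (∫ x, (f x - g x - μ[f - g]) ^ 2 ∂μ)
      ≤ ∫ x, (2 * (f x - μ[f]) ^ 2 + 2 * (g x - μ[g]) ^ 2) ∂μ := by
        refine integral_mono hint1 ((hintf.const_mul 2).add (hintg.const_mul 2)) fun x => ?_
        rw [hm]
        nlinarith [sq_nonneg ((f x - μ[f]) + (g x - μ[g]))]
    _ = 2 * (∫ x, (f x - μ[f]) ^ 2 ∂μ) + 2 * (∫ x, (g x - μ[g]) ^ 2 ∂μ) := by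
        rw [integral_add (hintf.const_mul 2) (hintg.const_mul 2),
          integral_const_mul, integral_const_mul]

lemma memℒp_arm {G : SimpleGraph V} (h : RGCRModel X Z μ p) (Y : V → ℝ) (b : Bool) :
    MemLp (fun ω => ∑ i : V, Y i * (exposure G X Z b i).indicator (fun _ => (1:ℝ)) ω /
        (μ (exposure G X Z b i)).toReal) 2 μ := by
  apply memLp_finset_sum
  intro i _
  have heq : (fun ω => Y i * (exposure G X Z b i).indicator (fun _ => (1:ℝ)) ω /
      (μ (exposure G X Z b i)).toReal)
      = (exposure G X Z b i).indicator
          (fun _ => Y i / (μ (exposure G X Z b i)).toReal) := by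
    funext ω
    by_cases hω : ω ∈ exposure G X Z b i <;>
      simp [Set.indicator_apply, hω]
  rw [heq]
  exact memLp_indicator_const 2 (measurableSet_exposure h.meas_X h.meas_Z b i) _
    (Or.inr (measure_ne_top μ _))

lemma variance_arm [Nonempty V] {G : SimpleGraph V} [DecidableRel G.Adj]
    (h : RGCRModel X Z μ p) (hp : p ∈ Set.Ioo (0:ℝ) 1)
    {κ : ℝ} (hκ : ∀ (j : V) (r : ℕ), 1 ≤ r →
      ((hopBall G j (r + 1)).ncard : ℝ) ≤ κ * ((hopBall G j r).ncard : ℝ))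
    {Ybar : ℝ} {Y : V → ℝ} (hY : ∀ i, Y i ∈ Set.Icc 0 Ybar) (b : Bool) :
    variance (fun ω => ∑ i : V, Y i * (exposure G X Z b i).indicator (fun _ => (1:ℝ)) ω /
        (μ (exposure G X Z b i)).toReal) μ
      ≤ (Fintype.card V : ℝ) *
        (Ybar ^ 2 * ((G.maxDegree : ℝ) + 1) ^ 2 * κ ^ 4 / (bif b then p else 1 - p)) := by
  classical
  obtain ⟨i0⟩ := ‹Nonempty V›
  have hYbar0 : 0 ≤ Ybar := le_trans (hY i0).1 (hY i0).2
  set pb : ℝ := bif b then p else 1 - p with hpbdef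
  have hpb : 0 < pb := by
    cases b
    · simp only [hpbdef, cond_false]; linarith [hp.2]
    · simp only [hpbdef, cond_true]; exact hp.1
  set D : ℝ := (G.maxDegree : ℝ) + 1 with hD
  have hD0 : 0 < D := by positivity
  have hBpos : ∀ (i : V) (r : ℕ), (0:ℝ) < ((hopBall G i r).ncard : ℝ) := by
    intro i r
    have := one_le_ncard_hopBall (G := G) i r
    exact_mod_cast lt_of_lt_of_le zero_lt_one (by exact_mod_cast this)
  have hB1 : ∀ i : V, ((hopBall G i 1).ncard : ℝ) ≤ D := by
    intro i
    have := ncard_hopBall_one_le (G := G) i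
    rw [hD]
    exact_mod_cast this
  have hκpos : 0 < κ := by
    have h2 := hκ i0 1 le_rfl
    nlinarith [hBpos i0 1, hBpos i0 2]
  have hB2 : ∀ i : V, ((hopBall G i 2).ncard : ℝ) ≤ D * κ := by
    intro i
    calc ((hopBall G i 2).ncard : ℝ) ≤ κ * ((hopBall G i 1).ncard : ℝ) := hκ i 1 le_rfl
      _ ≤ κ * D := by exact mul_le_mul_of_nonneg_left (hB1 i) hκpos.le
      _ = D * κ := mul_comm _ _
  have hB4 : ∀ i : V, ((hopBall G i 4).ncard : ℝ) ≤ D * κ ^ 3 := by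
    intro i
    calc ((hopBall G i 4).ncard : ℝ) ≤ κ * ((hopBall G i 3).ncard : ℝ) := hκ i 3 (by norm_num)
      _ ≤ κ * (κ * ((hopBall G i 2).ncard : ℝ)) :=
          mul_le_mul_of_nonneg_left (hκ i 2 (by norm_num)) hκpos.le
      _ ≤ κ * (κ * (D * κ)) := by
          refine mul_le_mul_of_nonneg_left ?_ hκpos.le
          exact mul_le_mul_of_nonneg_left (hB2 i) hκpos.le
      _ = D * κ ^ 3 := by ring
  set E : V → Set Ω := fun i => exposure G X Z b i with hEdef
  have hEmeas : ∀ i, MeasurableSet (E i) := fun i =>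
    measurableSet_exposure h.meas_X h.meas_Z b i
  set π : V → ℝ := fun i => (μ (E i)).toReal with hπdef
  have hπlb : ∀ i, pb / (D * κ) ≤ π i := by
    intro i
    calc pb / (D * κ) ≤ pb / ((hopBall G i 2).ncard : ℝ) :=
          div_le_div_of_nonneg_left hpb.le (hBpos i 2) (hB2 i)
      _ ≤ π i := toReal_exposure_ge h hp G b i
  have hπpos : ∀ i, 0 < π i :=
    fun i => lt_of_lt_of_le (div_pos hpb (by positivity)) (hπlb i)
  set a : V → ℝ := fun i => Y i / π i with hadef
  have ha0 : ∀ i, 0 ≤ a i := fun i => div_nonneg (hY i).1 (hπpos i).le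
  have haub : ∀ i, a i ≤ Ybar * (D * κ) / pb := by
    intro i
    show Y i / π i ≤ Ybar * (D * κ) / pb
    calc Y i / π i ≤ Ybar / π i := by
          gcongr
          exact (hY i).2
      _ ≤ Ybar / (pb / (D * κ)) :=
          div_le_div_of_nonneg_left hYbar0 (div_pos hpb (by positivity)) (hπlb i)
      _ = Ybar * (D * κ) / pb := by
          rw [div_div_eq_mul_div]
  set f : V → Ω → ℝ := fun i => (E i).indicator (fun _ => a i) with hfdef
  have hgoal_eq : (fun ω => ∑ i : V, Y i * (exposure G X Z b i).indicator (fun _ => (1:ℝ)) ω /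
      (μ (exposure G X Z b i)).toReal) = fun ω => ∑ i : V, f i ω := by
    funext ω
    refine Finset.sum_congr rfl fun i _ => ?_
    show Y i * (E i).indicator (fun _ => (1:ℝ)) ω / π i = (E i).indicator (fun _ => a i) ω
    by_cases hω : ω ∈ E i
    · rw [Set.indicator_of_mem hω, Set.indicator_of_mem hω]
      show Y i * 1 / π i = a i
      rw [mul_one]
    · rw [Set.indicator_of_notMem hω, Set.indicator_of_notMem hω]
      ring
  rw [hgoal_eq]
  have hfmem : ∀ i, MemLp (f i) 2 μ := by
    intro i
    simp only [hfdef]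
    exact memLp_indicator_const 2 (hEmeas i) _ (Or.inr (measure_ne_top μ _))
  have hS : MemLp (fun ω => ∑ i : V, f i ω) 2 μ := memLp_finset_sum _ fun i _ => hfmem i
  have hprod_eq : ∀ i j, (fun ω => f i ω * f j ω)
      = (E i ∩ E j).indicator (fun _ => a i * a j) := by
    intro i j; funext ω
    simp only [hfdef]
    exact (Set.inter_indicator_mul (fun _ => a i) (fun _ => a j) ω).symm
  have hint_ff_int : ∀ i j, Integrable (fun ω => f i ω * f j ω) μ := by
    intro i j; rw [hprod_eq i j]
    exact (integrable_const _).indicator ((hEmeas i).inter (hEmeas j))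
  have hint_ff : ∀ i j, ∫ ω, f i ω * f j ω ∂μ = (μ (E i ∩ E j)).toReal * (a i * a j) := by
    intro i j
    rw [hprod_eq i j, integral_indicator_const _ ((hEmeas i).inter (hEmeas j)), smul_eq_mul,
      measureReal_def]
  have hint_f : ∀ i, ∫ ω, f i ω ∂μ = π i * a i := by
    intro i
    have : (fun ω => f i ω) = (E i).indicator (fun _ => a i) := by
      funext ω; simp [hfdef]
    rw [this, integral_indicator_const _ (hEmeas i), smul_eq_mul, measureReal_def, hπdef]
  have hint_f_nonneg : ∀ i, 0 ≤ ∫ ω, f i ω ∂μ := by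
    intro i; rw [hint_f]; exact mul_nonneg (hπpos i).le (ha0 i)
  rw [variance_eq_sub hS]
  have hEsq : μ[(fun ω => ∑ i : V, f i ω) ^ 2]
      = ∑ i : V, ∑ j : V, ∫ ω, f i ω * f j ω ∂μ := by
    have h1 : ((fun ω => ∑ i : V, f i ω) ^ 2)
        = fun ω => ∑ i : V, ∑ j : V, f i ω * f j ω := by
      funext ω
      simp only [Pi.pow_apply]
      rw [sq, Finset.sum_mul_sum]
    rw [h1, integral_finset_sum _ fun i _ => integrable_finset_sum _ fun j _ => hint_ff_int i j]
    exact Finset.sum_congr rfl fun i _ => integral_finset_sum _ fun j _ => hint_ff_int i j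
  have hEmean : μ[fun ω => ∑ i : V, f i ω] = ∑ i : V, ∫ ω, f i ω ∂μ :=
    integral_finset_sum _ fun i _ => (hfmem i).integrable one_le_two
  rw [hEsq, hEmean]
  have key : (∑ i : V, ∑ j : V, ∫ ω, f i ω * f j ω ∂μ) - (∑ i : V, ∫ ω, f i ω ∂μ) ^ 2
      = ∑ i : V, ∑ j : V,
          ((∫ ω, f i ω * f j ω ∂μ) - (∫ ω, f i ω ∂μ) * (∫ ω, f j ω ∂μ)) := by
    rw [sq, Finset.sum_mul_sum, ← Finset.sum_sub_distrib]
    exact Finset.sum_congr rfl fun i _ => (Finset.sum_sub_distrib _ _).symm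
  rw [key]
  set Cpair : ℝ := Ybar * (D * κ) / pb * Ybar with hCpair
  have hCpair0 : 0 ≤ Cpair := by
    rw [hCpair]
    have : 0 ≤ Ybar * (D * κ) / pb := by positivity
    exact mul_nonneg this hYbar0
  have hπaY : ∀ j, π j * a j = Y j := by
    intro j
    show π j * (Y j / π j) = Y j
    rw [mul_comm]
    exact div_mul_cancel₀ (Y j) (hπpos j).ne'
  have hpair : ∀ i j : V, (∫ ω, f i ω * f j ω ∂μ) - (∫ ω, f i ω ∂μ) * (∫ ω, f j ω ∂μ)
      ≤ (if j ∈ (hopBall G i 4).toFinset then Cpair else 0) := by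
    intro i j
    by_cases hij : j ∈ (hopBall G i 4).toFinset
    · rw [if_pos hij]
      have h1 : (∫ ω, f i ω * f j ω ∂μ) ≤ Cpair := by
        rw [hint_ff]
        have hμle : (μ (E i ∩ E j)).toReal ≤ π j :=
          ENNReal.toReal_mono (measure_ne_top μ _)
            (measure_mono Set.inter_subset_right)
        calc (μ (E i ∩ E j)).toReal * (a i * a j) ≤ π j * (a i * a j) :=
              mul_le_mul_of_nonneg_right hμle (mul_nonneg (ha0 i) (ha0 j))
          _ = a i * (π j * a j) := by ring
          _ = a i * Y j := by rw [hπaY j]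
          _ ≤ (Ybar * (D * κ) / pb) * Ybar :=
              mul_le_mul (haub i) (hY j).2 (hY j).1 (by positivity)
          _ = Cpair := rfl
      have h2 : 0 ≤ (∫ ω, f i ω ∂μ) * (∫ ω, f j ω ∂μ) :=
        mul_nonneg (hint_f_nonneg i) (hint_f_nonneg j)
      linarith
    · rw [if_neg hij]
      have hfar : ¬ G.edist i j ≤ 4 := by
        intro hle
        apply hij
        rw [Set.mem_toFinset]
        show G.edist i j ≤ ((4:ℕ) : ℕ∞)
        exact_mod_cast hle
      have hindep : μ (E i ∩ E j) = μ (E i) * μ (E j) := exposure_indep h hfar b b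
      rw [hint_ff, hint_f, hint_f, hindep, ENNReal.toReal_mul]
      have : (μ (E i)).toReal = π i := rfl
      rw [this]
      have : (μ (E j)).toReal = π j := rfl
      rw [this]
      exact le_of_eq (by ring)
  calc (∑ i : V, ∑ j : V, ((∫ ω, f i ω * f j ω ∂μ) - (∫ ω, f i ω ∂μ) * (∫ ω, f j ω ∂μ)))
      ≤ ∑ i : V, ∑ j : V, (if j ∈ (hopBall G i 4).toFinset then Cpair else 0) :=
        Finset.sum_le_sum fun i _ => Finset.sum_le_sum fun j _ => hpair i j
    _ = ∑ i : V, ((hopBall G i 4).toFinset.card : ℝ) * Cpair := by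
        refine Finset.sum_congr rfl fun i _ => ?_
        rw [Finset.sum_ite_mem, Finset.univ_inter, Finset.sum_const, nsmul_eq_mul]
    _ ≤ ∑ i : V, (D * κ ^ 3) * Cpair := by
        refine Finset.sum_le_sum fun i _ => ?_
        have hcard : ((hopBall G i 4).toFinset.card : ℝ) = ((hopBall G i 4).ncard : ℝ) := by
          rw [Set.ncard_eq_toFinset_card']
        rw [hcard]
        exact mul_le_mul_of_nonneg_right (hB4 i) hCpair0
    _ = (Fintype.card V : ℝ) * (Ybar ^ 2 * D ^ 2 * κ ^ 4 / pb) := by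
        rw [Finset.sum_const, Finset.card_univ, nsmul_eq_mul, hCpair]
        field_simp

end RGCRProof

open RGCRProof

theorem ht_gate_variance_upper_bound_growth
    {V Ω : Type*} [Fintype V] [MeasurableSpace Ω]
    (G : SimpleGraph V) [DecidableRel G.Adj]
    (μ : Measure Ω) [IsProbabilityMeasure μ]
    (X : V → Ω → ℝ) (Z : V → Ω → Bool) (p : ℝ) (hp : p ∈ Set.Ioo (0:ℝ) 1)
    (hmodel : RGCRModel X Z μ p)
    (κ : ℝ)
    (hκ : ∀ (j : V) (r : ℕ), 1 ≤ r →
      ((hopBall G j (r + 1)).ncard : ℝ) ≤ κ * ((hopBall G j r).ncard : ℝ))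
    (Ybar : ℝ) (Y1 Y0 : V → ℝ)
    (hY1 : ∀ i, Y1 i ∈ Set.Icc 0 Ybar) (hY0 : ∀ i, Y0 i ∈ Set.Icc 0 Ybar)
    (hpos1 : ∀ i : V, 0 < μ (exposure G X Z true i))
    (hpos0 : ∀ i : V, 0 < μ (exposure G X Z false i)) :
    variance (fun ω =>
        (Fintype.card V : ℝ)⁻¹ *
          ∑ i : V, Y1 i * (exposure G X Z true i).indicator (fun _ => (1:ℝ)) ω /
            (μ (exposure G X Z true i)).toReal
        - (Fintype.card V : ℝ)⁻¹ *
          ∑ i : V, Y0 i * (exposure G X Z false i).indicator (fun _ => (1:ℝ)) ω /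
            (μ (exposure G X Z false i)).toReal) μ
      ≤ 2 * (Fintype.card V : ℝ)⁻¹ * Ybar ^ 2 * ((G.maxDegree : ℝ) + 1) ^ 2 * κ ^ 4 *
          (p⁻¹ + (1 - p)⁻¹) := by
  classical
  rcases isEmpty_or_nonempty V with hV | hV
  · have hcard : (Fintype.card V : ℝ) = 0 := by simp
    have hzero : (fun ω =>
        (Fintype.card V : ℝ)⁻¹ *
          ∑ i : V, Y1 i * (exposure G X Z true i).indicator (fun _ => (1:ℝ)) ω /
            (μ (exposure G X Z true i)).toReal
        - (Fintype.card V : ℝ)⁻¹ *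
          ∑ i : V, Y0 i * (exposure G X Z false i).indicator (fun _ => (1:ℝ)) ω /
            (μ (exposure G X Z false i)).toReal) = fun _ : Ω => (0:ℝ) := by
      funext ω
      rw [Finset.univ_eq_empty, Finset.sum_empty, Finset.sum_empty]
      ring
    rw [hzero, hcard]
    have : variance (fun _ : Ω => (0:ℝ)) μ = 0 := variance_zero μ
    rw [this]
    simp
  · set n : ℝ := (Fintype.card V : ℝ) with hn
    have hnpos : 0 < n := by
      rw [hn]
      exact_mod_cast Fintype.card_pos
    set S1 : Ω → ℝ := fun ω => ∑ i : V, Y1 i *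
        (exposure G X Z true i).indicator (fun _ => (1:ℝ)) ω /
        (μ (exposure G X Z true i)).toReal with hS1
    set S0 : Ω → ℝ := fun ω => ∑ i : V, Y0 i *
        (exposure G X Z false i).indicator (fun _ => (1:ℝ)) ω /
        (μ (exposure G X Z false i)).toReal with hS0
    have hS1m : MemLp S1 2 μ := memℒp_arm hmodel Y1 true
    have hS0m : MemLp S0 2 μ := memℒp_arm hmodel Y0 false
    have hF1m : MemLp (fun ω => n⁻¹ * S1 ω) 2 μ := hS1m.const_mul _
    have hF0m : MemLp (fun ω => n⁻¹ * S0 ω) 2 μ := hS0m.const_mul _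
    set D : ℝ := (G.maxDegree : ℝ) + 1 with hD
    have harm1 := variance_arm hmodel hp hκ hY1 true
    have harm0 := variance_arm hmodel hp hκ hY0 false
    simp only [cond_true] at harm1
    simp only [cond_false] at harm0
    have hvar1 : variance S1 μ ≤ n * (Ybar ^ 2 * D ^ 2 * κ ^ 4 / p) := harm1
    have hvar0 : variance S0 μ ≤ n * (Ybar ^ 2 * D ^ 2 * κ ^ 4 / (1 - p)) := harm0
    have hp0 : p ≠ 0 := ne_of_gt hp.1
    have hp1 : (1:ℝ) - p ≠ 0 := by linarith [hp.2]
    calc variance (fun ω => n⁻¹ * S1 ω - n⁻¹ * S0 ω) μ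
        = variance ((fun ω => n⁻¹ * S1 ω) - fun ω => n⁻¹ * S0 ω) μ := rfl
      _ ≤ 2 * variance (fun ω => n⁻¹ * S1 ω) μ + 2 * variance (fun ω => n⁻¹ * S0 ω) μ :=
          variance_sub_le hF1m hF0m
      _ = 2 * (n⁻¹ ^ 2 * variance S1 μ) + 2 * (n⁻¹ ^ 2 * variance S0 μ) := by
          rw [variance_const_mul, variance_const_mul]
      _ ≤ 2 * (n⁻¹ ^ 2 * (n * (Ybar ^ 2 * D ^ 2 * κ ^ 4 / p)))
          + 2 * (n⁻¹ ^ 2 * (n * (Ybar ^ 2 * D ^ 2 * κ ^ 4 / (1 - p)))) := by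
          gcongr
      _ = 2 * n⁻¹ * Ybar ^ 2 * D ^ 2 * κ ^ 4 * (p⁻¹ + (1 - p)⁻¹) := by
          field_simp
end
end

section
/- Let G be a finite simple graph, π : V → ℕ an injective ranking of the vertices, and S ⊆ V a set satisfying the greedy 3-net characterization: for every node v, v ∈ S if and only if every s ∈ S with π(s) < π(v) has dist_G(s,v) > 2. Suppose node i satisfies π(i) < π(j) for every j ∈ B_2(i) with j ≠ i. Then (a) i ∈ S, and (b) for every j ∈ B_1(i) and every s ∈ S with s ≠ i, dist_G(j,s) ≥ 2 > dist_G(j,i); hence i is the strictly nearest element of S to every node of B_1(i), so in the 3-net clustering all of B_1(i) is assigned to the cluster of seed i regardless of tie-breaking. -/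
open SimpleGraph Set

noncomputable section

/-- Let `π` be an injective ranking of the vertices and `S` the
greedy 3-net seed set: `v ∈ S` iff every earlier-ranked `s ∈ S` has
`dist(s, v) > 2`.  If node `i` is ranked first within `B₂(i)`, then (a) `i ∈ S`,
and (b) for every `j ∈ B₁(i)` and every seed `s ∈ S` with `s ≠ i` we have
`dist(j, s) ≥ 2 > dist(j, i)`; hence `i` is the strictly nearest seed to every
node of `B₁(i)`, so all of `B₁(i)` is assigned to the cluster of seed `i`
regardless of tie-breaking. -/
theorem three_net_first_ranked_is_seed
    {V : Type*} (G : SimpleGraph V)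
    (π : V → ℕ) (hπ : Function.Injective π)
    (S : Set V)
    (hS : ∀ v, v ∈ S ↔ ∀ s ∈ S, π s < π v → 2 < G.edist s v)
    (i : V) (hi : ∀ j ∈ hopBall G i 2, j ≠ i → π i < π j) :
    i ∈ S ∧
      ∀ j ∈ hopBall G i 1, ∀ s ∈ S, s ≠ i → 2 ≤ G.edist j s ∧ G.edist j i < 2 := by
  have hiS : i ∈ S := by
    rw [hS]
    intro s hs hlt
    by_contra h
    push_neg at h
    have hball : s ∈ hopBall G i 2 := by
      simpa [hopBall, G.edist_comm] using h
    have hne : s ≠ i := fun e => absurd hlt (by simp [e])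
    exact absurd (hi s hball hne) (by omega)
  refine ⟨hiS, ?_⟩
  intro j hj s hs hne
  have hj1 : G.edist i j ≤ 1 := hj
  constructor
  · by_contra h
    push_neg at h
    have hjs : G.edist j s ≤ 1 := by
      simpa using h
    have his : G.edist i s ≤ 2 := by
      calc G.edist i s ≤ G.edist i j + G.edist j s := G.edist_triangle
        _ ≤ 1 + 1 := add_le_add hj1 hjs
        _ = 2 := by norm_num
    have hlt : π i < π s := hi s his hne
    have := (hS s).mp hs i hiS hlt
    exact absurd his (by exact not_le.mpr this)
  · calc G.edist j i = G.edist i j := G.edist_comm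
      _ ≤ 1 := hj1
      _ < 2 := by norm_num
end
end
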